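/- arXiv:math/0703255 — 16 statements merged into one kernel-verified Lean document; each statement's English description precedes it below -/
import Mathlib

section
/- For every natural number n, the sum over k of binom(n,k)^2 * binom(3k, 2n) equals the sum over k of binom(n,k)^2 * binom(2k,k); that is, ∑_{k=0}^{n} C(n,k)^2 C(3k,2n) = ∑_{k=0}^{n} C(n,k)^2 C(2k,k). -/
open Finset

private lemma vand (M N q : ℕ) :
    (M + N).choose q = ∑ j ∈ range (q + 1), M.choose j * N.choose (q - j) := by
  rw [Nat.add_choose_eq, Finset.Nat.sum_antidiagonal_eq_sum_range_succ_mk]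

private lemma tri (a b c : ℕ) :
    a.choose (b + c) * (b + c).choose b = a.choose b * (a - b).choose c := by
  rcases le_or_gt (b + c) a with h | h
  · have h2 := Nat.choose_mul (n := a) (Nat.le_add_right b c)
    simpa using h2
  · rw [Nat.choose_eq_zero_of_lt h, Nat.zero_mul]
    rcases le_or_gt b a with hb | hb
    · rw [Nat.choose_eq_zero_of_lt (show a - b < c by omega), Nat.mul_zero]
    · rw [Nat.choose_eq_zero_of_lt hb, Nat.zero_mul]

private lemma tri2 {n t u : ℕ} (ht : t ≤ n) (hu : u ≤ n) :
    n.choose t * (n - t).choose (n - u) = n.choose u * u.choose t := by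
  rcases le_or_gt t u with h | h
  · have h2 : (n - t).choose (n - u) = (n - t).choose (u - t) := by
      rw [show u - t = (n - t) - (n - u) by omega, Nat.choose_symm (by omega)]
    have h3 := tri n t (u - t)
    rw [show t + (u - t) = u by omega] at h3
    rw [h2, ← h3]
  · rw [Nat.choose_eq_zero_of_lt (show n - t < n - u by omega),
      Nat.choose_eq_zero_of_lt h, Nat.mul_zero, Nat.mul_zero]

private lemma sum_range_shrink {f : ℕ → ℕ} {a b : ℕ} (hab : a ≤ b)
    (h : ∀ t, a ≤ t → f t = 0) :
    ∑ t ∈ range b, f t = ∑ t ∈ range a, f t := by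
  symm
  apply Finset.sum_subset (range_subset_range.2 hab)
  intro x _ hxa
  have hax : a ≤ x := by
    by_contra hc
    exact hxa (mem_range.2 (by omega))
  exact h x hax

private lemma central (b : ℕ) :
    ∑ u ∈ range (b + 1), b.choose u * b.choose u = (2 * b).choose b := by
  rw [show 2 * b = b + b by ring, vand b b b]
  apply sum_congr rfl
  intro u hu
  have hu' : u ≤ b := by
    have := mem_range.1 hu; omega
  rw [Nat.choose_symm hu']

private lemma vand_sq (m N r : ℕ) (h : N < r) :
    ∑ t ∈ range r, m.choose t * N.choose t = (m + N).choose N := by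
  rw [sum_range_shrink (show N + 1 ≤ r by omega)
    (fun t ht => by rw [Nat.choose_eq_zero_of_lt (show N < t by omega), Nat.mul_zero])]
  rw [vand m N N]
  apply sum_congr rfl
  intro t ht
  have ht' : t ≤ N := by have := mem_range.1 ht; omega
  rw [Nat.choose_symm ht']

private lemma sur (m u p : ℕ) :
    ∑ t ∈ range (u + 1), m.choose t * u.choose t * (m + u + p - t).choose (m + u)
      = (m + p).choose m * (u + p).choose u := by
  have step1 : ∀ t ∈ range (u + 1),
      m.choose t * u.choose t * (m + u + p - t).choose (m + u)
      = ∑ j ∈ range (m + u + 1),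
          (m + p).choose (m + u - j) * (u.choose j * (u - j).choose t) * m.choose t := by
    intro t ht
    have ht' : t ≤ u := by have := mem_range.1 ht; omega
    rw [show m + u + p - t = (u - t) + (m + p) by omega, vand, Finset.mul_sum]
    apply sum_congr rfl
    intro j hj
    have hsw : u.choose t * (u - t).choose j = u.choose j * (u - j).choose t := by
      have h1 := tri u t j
      have h2 := tri u j t
      rw [Nat.add_comm j t] at h2
      rw [← h1, Nat.choose_symm_add, h2]
    calc m.choose t * u.choose t * ((u - t).choose j * (m + p).choose (m + u - j))
        = (u.choose t * (u - t).choose j) * (m + p).choose (m + u - j) * m.choose t := by ring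
      _ = (u.choose j * (u - j).choose t) * (m + p).choose (m + u - j) * m.choose t := by
          rw [hsw]
      _ = (m + p).choose (m + u - j) * (u.choose j * (u - j).choose t) * m.choose t := by ring
  rw [sum_congr rfl step1, Finset.sum_comm]
  have step2 : ∀ j ∈ range (m + u + 1),
      (∑ t ∈ range (u + 1),
        (m + p).choose (m + u - j) * (u.choose j * (u - j).choose t) * m.choose t)
      = (m + p).choose (m + u - j) * u.choose j * (m + (u - j)).choose (u - j) := by
    intro j hj
    have : ∀ t ∈ range (u + 1),
        (m + p).choose (m + u - j) * (u.choose j * (u - j).choose t) * m.choose t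
        = ((m + p).choose (m + u - j) * u.choose j) * (m.choose t * (u - j).choose t) := by
      intro t _; ring
    rw [sum_congr rfl this, ← Finset.mul_sum, vand_sq m (u - j) (u + 1) (by omega)]
  rw [sum_congr rfl step2]
  rw [sum_range_shrink (show u + 1 ≤ m + u + 1 by omega)
    (fun j hj => by rw [Nat.choose_eq_zero_of_lt (show u < j by omega), Nat.mul_zero,
      Nat.zero_mul])]
  have step3 : ∀ j ∈ range (u + 1),
      (m + p).choose (m + u - j) * u.choose j * (m + (u - j)).choose (u - j)
      = (m + p).choose m * (u.choose j * p.choose (u - j)) := by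
    intro j hj
    have hj' : j ≤ u := by have := mem_range.1 hj; omega
    have h1 := tri (m + p) m (u - j)
    rw [show m + p - m = p by omega] at h1
    rw [show m + u - j = m + (u - j) by omega]
    rw [show (m + (u - j)).choose (u - j) = (m + (u - j)).choose m from Nat.choose_symm_add.symm]
    calc (m + p).choose (m + (u - j)) * u.choose j * (m + (u - j)).choose m
        = ((m + p).choose (m + (u - j)) * (m + (u - j)).choose m) * u.choose j := by ring
      _ = ((m + p).choose m * p.choose (u - j)) * u.choose j := by rw [h1]
      _ = (m + p).choose m * (u.choose j * p.choose (u - j)) := by ring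
  rw [sum_congr rfl step3, ← Finset.mul_sum, ← vand u p u]

private lemma sum_range_move {f : ℕ → ℕ} (a b : ℕ) (ha : ∀ t, a ≤ t → f t = 0)
    (hb : ∀ t, b ≤ t → f t = 0) : ∑ t ∈ range a, f t = ∑ t ∈ range b, f t := by
  rcases le_total a b with h | h
  · exact (sum_range_shrink h ha).symm
  · exact sum_range_shrink h hb

private lemma LA (m b : ℕ) :
    ∑ i ∈ range (m + 1),
        (m + b).choose (b + i) * m.choose i * (2 * (b + i)).choose (2 * m + b)
      = (m + b).choose b * (2 * b).choose b := by
  rw [← Finset.sum_range_reflect]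
  have stepA : ∀ t ∈ range (m + 1),
      (m + b).choose (b + (m + 1 - 1 - t)) * m.choose (m + 1 - 1 - t)
          * (2 * (b + (m + 1 - 1 - t))).choose (2 * m + b)
      = ∑ u ∈ range (m + b + 1),
          m.choose t * ((m + b).choose u * u.choose t) * (m + b - t).choose (m + u) := by
    intro t ht
    have ht' : t ≤ m := by have := mem_range.1 ht; omega
    rw [show m + 1 - 1 - t = m - t by omega]
    rw [show b + (m - t) = m + b - t by omega]
    rw [show m.choose (m - t) = m.choose t from Nat.choose_symm ht']
    rw [show (m + b).choose (m + b - t) = (m + b).choose t from Nat.choose_symm (by omega)]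
    rw [show 2 * (m + b - t) = (m + b - t) + (m + b - t) by omega]
    rw [vand (m + b - t) (m + b - t) (2 * m + b)]
    rw [sum_range_shrink (show m + b + 1 ≤ 2 * m + b + 1 by omega)
      (fun q hq => by
        rw [Nat.choose_eq_zero_of_lt (show m + b - t < q by omega), Nat.zero_mul])]
    rw [← Finset.sum_range_reflect
      (fun q => (m + b - t).choose q * (m + b - t).choose (2 * m + b - q)) (m + b + 1)]
    rw [Finset.mul_sum]
    apply sum_congr rfl
    intro u hu
    have hu' : u ≤ m + b := by have := mem_range.1 hu; omega
    rw [show m + b + 1 - 1 - u = m + b - u by omega]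
    rw [show 2 * m + b - (m + b - u) = m + u by omega]
    have h2 : (m + b).choose t * (m + b - t).choose (m + b - u)
        = (m + b).choose u * u.choose t := tri2 (by omega) hu'
    calc (m + b).choose t * m.choose t
          * ((m + b - t).choose (m + b - u) * (m + b - t).choose (m + u))
        = m.choose t * ((m + b).choose t * (m + b - t).choose (m + b - u))
          * (m + b - t).choose (m + u) := by ring
      _ = m.choose t * ((m + b).choose u * u.choose t) * (m + b - t).choose (m + u) := by
          rw [h2]
  rw [sum_congr rfl stepA, Finset.sum_comm]
  have stepD : ∀ u ∈ range (m + b + 1),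
      (∑ t ∈ range (m + 1),
        m.choose t * ((m + b).choose u * u.choose t) * (m + b - t).choose (m + u))
      = (m + b).choose b * (b.choose u * b.choose u) := by
    intro u hu
    have hu' : u ≤ m + b := by have := mem_range.1 hu; omega
    rcases le_or_gt u b with hub | hub
    · -- u ≤ b : use sur with p = b - u
      have hre : ∀ t ∈ range (m + 1),
          m.choose t * ((m + b).choose u * u.choose t) * (m + b - t).choose (m + u)
          = (m + b).choose u * (m.choose t * u.choose t * (m + u + (b - u) - t).choose (m + u)) := by
        intro t ht
        have ht' : t ≤ m := by have := mem_range.1 ht; omega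
        rw [show m + u + (b - u) - t = m + b - t by omega]
        ring
      rw [sum_congr rfl hre, ← Finset.mul_sum]
      rw [sum_range_move (m + 1) (u + 1)
        (fun t htm => by
          rw [Nat.choose_eq_zero_of_lt (show m < t by omega), Nat.zero_mul, Nat.zero_mul])
        (fun t htu => by
          rw [Nat.choose_eq_zero_of_lt (show u < t by omega), Nat.mul_zero, Nat.zero_mul])]
      rw [sur m u (b - u)]
      rw [show u + (b - u) = b by omega]
      have h1 := tri (m + b) u (b - u)
      rw [show u + (b - u) = b by omega] at h1
      rw [show (m + (b - u)).choose m = (m + b - u).choose (b - u) by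
        rw [Nat.choose_symm_add, show m + (b - u) = m + b - u by omega]]
      calc (m + b).choose u * ((m + b - u).choose (b - u) * b.choose u)
          = ((m + b).choose u * (m + b - u).choose (b - u)) * b.choose u := by ring
        _ = ((m + b).choose b * b.choose u) * b.choose u := by rw [← h1]
        _ = (m + b).choose b * (b.choose u * b.choose u) := by ring
    · -- b < u : both sides zero
      have hz : ∀ t ∈ range (m + 1),
          m.choose t * ((m + b).choose u * u.choose t) * (m + b - t).choose (m + u) = 0 := by
        intro t _
        rw [Nat.choose_eq_zero_of_lt (show m + b - t < m + u by omega), Nat.mul_zero]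
      rw [Finset.sum_eq_zero hz, Nat.choose_eq_zero_of_lt hub]
      ring
  rw [sum_congr rfl stepD, ← Finset.mul_sum]
  rw [sum_range_shrink (show b + 1 ≤ m + b + 1 by omega)
    (fun u huu => by
      rw [Nat.choose_eq_zero_of_lt (show b < u by omega), Nat.zero_mul])]
  rw [central b]

theorem stmt_0 (n : ℕ) :
    ∑ k ∈ Finset.range (n + 1), (n.choose k) ^ 2 * ((3 * k).choose (2 * n)) =
      ∑ k ∈ Finset.range (n + 1), (n.choose k) ^ 2 * ((2 * k).choose k) := by
  have step1 : ∀ k ∈ range (n + 1),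
      n.choose k ^ 2 * (3 * k).choose (2 * n)
      = ∑ b ∈ range (2 * n + 1),
          n.choose k * n.choose k * (k.choose b * (2 * k).choose (2 * n - b)) := by
    intro k _
    rw [show 3 * k = k + 2 * k by ring, vand k (2 * k) (2 * n), pow_two, Finset.mul_sum]
  rw [sum_congr rfl step1, Finset.sum_comm]
  have step2 : ∀ b ∈ range (2 * n + 1),
      (∑ k ∈ range (n + 1),
        n.choose k * n.choose k * (k.choose b * (2 * k).choose (2 * n - b)))
      = n.choose b * n.choose b * (2 * b).choose b := by
    intro b _
    rcases le_or_gt b n with hbn | hbn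
    · have hsub : Finset.Ico b (n + 1) ⊆ range (n + 1) := by
        rw [Finset.range_eq_Ico]
        exact Finset.Ico_subset_Ico (by omega) le_rfl
      rw [← Finset.sum_subset hsub (fun k hk hk2 => by
        have hkb : k < b := by
          have h1 := mem_range.1 hk
          by_contra hc
          exact hk2 (Finset.mem_Ico.2 ⟨by omega, h1⟩)
        rw [Nat.choose_eq_zero_of_lt hkb, Nat.zero_mul, Nat.mul_zero])]
      rw [Finset.sum_Ico_eq_sum_range]
      rw [show n + 1 - b = (n - b) + 1 by omega]
      have hterm : ∀ i ∈ range ((n - b) + 1),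
          n.choose (b + i) * n.choose (b + i)
            * ((b + i).choose b * (2 * (b + i)).choose (2 * n - b))
          = n.choose b * ((n - b + b).choose (b + i) * (n - b).choose i
              * (2 * (b + i)).choose (2 * (n - b) + b)) := by
        intro i _
        have h3 := tri n b i
        rw [show 2 * n - b = 2 * (n - b) + b by omega, show n - b + b = n by omega]
        calc n.choose (b + i) * n.choose (b + i)
              * ((b + i).choose b * (2 * (b + i)).choose (2 * (n - b) + b))
            = (n.choose (b + i) * (b + i).choose b)
              * (n.choose (b + i) * (2 * (b + i)).choose (2 * (n - b) + b)) := by ring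
          _ = (n.choose b * (n - b).choose i)
              * (n.choose (b + i) * (2 * (b + i)).choose (2 * (n - b) + b)) := by rw [h3]
          _ = n.choose b * (n.choose (b + i) * (n - b).choose i
              * (2 * (b + i)).choose (2 * (n - b) + b)) := by ring
      rw [sum_congr rfl hterm, ← Finset.mul_sum]
      have hla := LA (n - b) b
      rw [hla, show n - b + b = n by omega]
      ring
    · have hz : ∀ k ∈ range (n + 1),
          n.choose k * n.choose k * (k.choose b * (2 * k).choose (2 * n - b)) = 0 := by
        intro k hk
        rw [Nat.choose_eq_zero_of_lt (show k < b by have := mem_range.1 hk; omega),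
          Nat.zero_mul, Nat.mul_zero]
      rw [Finset.sum_eq_zero hz, Nat.choose_eq_zero_of_lt hbn]
      ring
  rw [sum_congr rfl step2]
  rw [sum_range_shrink (show n + 1 ≤ 2 * n + 1 by omega) (fun b hb => by
    rw [Nat.choose_eq_zero_of_lt (show n < b by omega)]; ring)]
  apply sum_congr rfl
  intro k _
  rw [pow_two]
end

section
/- For every natural number n, ∑_{k=0}^{n} (-1)^{n+k} C(n,k) C(n+k,n)^2 = ∑_{k=0}^{n} C(n,k)^2 C(n+k,n), as integers. -/
open Finset

/-- Alternating sum lemma: `∑ m (-1)^m C(N,m) C(m+i,j) = (-1)^N C(i, j-N)` (zero if `j < N`). -/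
lemma aux1 (N : ℕ) : ∀ i j : ℕ,
    ∑ m ∈ Finset.range (N + 1), (-1 : ℤ) ^ m * (N.choose m) * ((m + i).choose j)
      = (-1) ^ N * (if N ≤ j then ((i.choose (j - N)) : ℤ) else 0) := by
  induction N with
  | zero => intro i j; simp
  | succ N ih =>
    intro i j
    have key : ∑ m ∈ Finset.range (N + 2), (-1 : ℤ) ^ m * ((N+1).choose m) * ((m + i).choose j)
        = (∑ m ∈ Finset.range (N + 1), (-1 : ℤ) ^ m * (N.choose m) * ((m + i).choose j))
          - (∑ m ∈ Finset.range (N + 1), (-1 : ℤ) ^ m * (N.choose m) * ((m + (i+1)).choose j)) := by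
      rw [Finset.sum_range_succ' (fun m => (-1 : ℤ) ^ m * ((N+1).choose m) * ((m + i).choose j))]
      have hsplit : ∀ s ∈ Finset.range (N+1),
          (-1 : ℤ) ^ (s+1) * ((N+1).choose (s+1)) * ((s+1 + i).choose j)
            = -((-1 : ℤ) ^ s * (N.choose s) * ((s + (i+1)).choose j))
              + (-((-1 : ℤ) ^ s * (N.choose (s+1)) * (((s+1) + i).choose j))) := by
        intro s _
        have h1 : s + 1 + i = s + (i + 1) := by ring
        rw [Nat.choose_succ_succ, h1]
        push_cast
        ring
      rw [Finset.sum_congr rfl hsplit, Finset.sum_add_distrib]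
      have hT : ∑ s ∈ Finset.range (N+1),
          (-((-1 : ℤ) ^ s * (N.choose (s+1)) * (((s+1) + i).choose j)))
          = (∑ m ∈ Finset.range (N+1), (-1 : ℤ) ^ m * (N.choose m) * ((m + i).choose j))
            - ((i.choose j : ℤ)) := by
        have e1 : ∑ m ∈ Finset.range (N + 2), (-1 : ℤ) ^ m * (N.choose m) * ((m + i).choose j)
            = (∑ s ∈ Finset.range (N+1),
                (-1 : ℤ) ^ (s+1) * (N.choose (s+1)) * (((s+1) + i).choose j))
              + (-1 : ℤ) ^ 0 * (N.choose 0) * ((0 + i).choose j) :=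
          Finset.sum_range_succ' _ _
        have e2 : ∑ m ∈ Finset.range (N + 2), (-1 : ℤ) ^ m * (N.choose m) * ((m + i).choose j)
            = (∑ m ∈ Finset.range (N+1), (-1 : ℤ) ^ m * (N.choose m) * ((m + i).choose j)) := by
          rw [Finset.sum_range_succ]
          simp [Nat.choose_succ_self]
        have e3 : ∀ s, -((-1 : ℤ) ^ s * (N.choose (s+1)) * (((s+1) + i).choose j))
            = (-1 : ℤ) ^ (s+1) * (N.choose (s+1)) * (((s+1) + i).choose j) := by
          intro s; ring
        simp only [e3]
        have := e1.symm.trans e2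
        simp only [pow_zero, Nat.choose_zero_right, Nat.cast_one, one_mul, Nat.zero_add] at this
        -- this : (∑ s ..., (-1)^(s+1) * ...) + (i.choose j : ℤ) = ∑ m in range (N+1), ...
        have h4 : (∑ s ∈ Finset.range (N+1),
            (-1 : ℤ) ^ (s+1) * (N.choose (s+1)) * (((s+1) + i).choose j))
            = (∑ m ∈ Finset.range (N+1), (-1 : ℤ) ^ m * (N.choose m) * ((m + i).choose j))
              - ((i.choose j : ℤ)) := by linarith
        exact h4
      rw [hT]
      simp
      ring
    rw [key, ih i j, ih (i+1) j]
    by_cases h1 : N + 1 ≤ j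
    · have h0 : N ≤ j := by omega
      rw [if_pos h0, if_pos h0, if_pos h1]
      have hjN : j - N = (j - (N+1)) + 1 := by omega
      rw [hjN, Nat.choose_succ_succ]
      push_cast
      ring
    · by_cases h0 : N ≤ j
      · have hj : j = N := by omega
        rw [if_pos h0, if_pos h0, if_neg h1]
        subst hj
        simp
      · rw [if_neg h0, if_neg h0, if_neg h1]
        ring

/-- Vandermonde in range form: `C(n+k, n) = ∑_{j≤n} C(n,j) C(k, n-j)`. -/
lemma aux_vand (n k : ℕ) :
    ((n + k).choose n : ℤ) = ∑ j ∈ Finset.range (n + 1), (n.choose j : ℤ) * (k.choose (n - j)) := by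
  have := Nat.add_choose_eq n k n
  rw [Finset.Nat.sum_antidiagonal_eq_sum_range_succ_mk] at this
  exact_mod_cast congrArg (Nat.cast : ℕ → ℤ) this

/-- Vandermonde symmetric form: for `k ≤ n`, `C(n+k, n) = ∑_{j≤n} C(n,j) C(k,j)`. -/
lemma aux_vand2 (n k : ℕ) :
    ((n + k).choose n : ℤ) = ∑ j ∈ Finset.range (n + 1), (n.choose j : ℤ) * (k.choose j) := by
  rw [aux_vand]
  rw [← Finset.sum_range_reflect]
  apply Finset.sum_congr rfl
  intro j hj
  have hj' : j ≤ n := by simpa using Nat.lt_succ_iff.mp (Finset.mem_range.mp hj)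
  have h1 : n + 1 - 1 - j = n - j := by omega
  rw [h1, Nat.choose_symm hj']
  have h2 : n - (n - j) = j := by omega
  rw [h2]

/-- Inner alternating sum evaluates to `C(n,i) C(i, n-j)`. -/
lemma aux2 (n i j : ℕ) (hi : i ≤ n) :
    ∑ k ∈ Finset.range (n + 1),
        (-1 : ℤ) ^ (n + k) * (n.choose k) * (k.choose i) * (k.choose j)
      = (n.choose i : ℤ) * ((-1 : ℤ)^(n+i) * ((-1 : ℤ)^(n-i) *
          (if n - i ≤ j then ((i.choose (j - (n-i))) : ℤ) else 0))) := by
  have hsub : Finset.Ico i (n+1) ⊆ Finset.range (n+1) := by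
    intro k hk; simp only [Finset.mem_Ico] at hk; simp [Finset.mem_range]; omega
  rw [← Finset.sum_subset hsub (by
    intro k hk hk'
    simp only [Finset.mem_range] at hk
    simp only [Finset.mem_Ico] at hk'
    have : k < i := by omega
    simp [Nat.choose_eq_zero_of_lt this])]
  rw [Finset.sum_Ico_eq_sum_range]
  have hni : n + 1 - i = (n - i) + 1 := by omega
  rw [hni]
  have step : ∀ m ∈ Finset.range (n - i + 1),
      (-1 : ℤ) ^ (n + (i + m)) * (n.choose (i+m)) * ((i+m).choose i) * ((i+m).choose j)
        = ((n.choose i : ℤ) * (-1)^(n+i)) *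
            ((-1 : ℤ) ^ m * (((n-i).choose m) : ℤ) * ((m + i).choose j)) := by
    intro m hm
    have hm' : m ≤ n - i := by simpa using Nat.lt_succ_iff.mp (Finset.mem_range.mp hm)
    have him : i + m ≤ n := by omega
    have h2 : n.choose (i+m) * (i+m).choose i = n.choose i * (n-i).choose m := by
      have := Nat.choose_mul (n := n) (Nat.le_add_right i m)
      simpa using this
    have h2' : ((n.choose (i+m) : ℤ)) * ((i+m).choose i) = (n.choose i : ℤ) * ((n-i).choose m) := by
      exact_mod_cast congrArg (Nat.cast : ℕ → ℤ) h2
    have hpow : (-1 : ℤ) ^ (n + (i + m)) = (-1)^(n+i) * (-1)^m := by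
      rw [← pow_add]; ring_nf
    have hmi : i + m = m + i := by ring
    calc (-1 : ℤ) ^ (n + (i + m)) * (n.choose (i+m)) * ((i+m).choose i) * ((i+m).choose j)
        = ((-1)^(n+i) * (-1)^m) * (((n.choose (i+m) : ℤ)) * ((i+m).choose i)) * ((m+i).choose j) := by
          rw [hpow, hmi]; ring
      _ = ((n.choose i : ℤ) * (-1)^(n+i)) *
            ((-1 : ℤ) ^ m * (((n-i).choose m) : ℤ) * ((m + i).choose j)) := by
          rw [h2']; ring
  rw [Finset.sum_congr rfl step, ← Finset.mul_sum, aux1 (n-i) i j]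
  ring

theorem stmt_1 (n : ℕ) :
    ∑ k ∈ Finset.range (n + 1),
        (-1 : ℤ) ^ (n + k) * (n.choose k) * ((n + k).choose n) ^ 2 =
      ∑ k ∈ Finset.range (n + 1), ((n.choose k : ℤ)) ^ 2 * ((n + k).choose n) := by
  have expand : ∀ k ∈ Finset.range (n+1),
      (-1 : ℤ) ^ (n + k) * (n.choose k) * ((n + k).choose n) ^ 2
        = ∑ i ∈ Finset.range (n+1), ∑ j ∈ Finset.range (n+1),
            ((n.choose i : ℤ) * (n.choose j)) *
              ((-1 : ℤ) ^ (n + k) * (n.choose k) * (k.choose i) * (k.choose j)) := by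
    intro k _
    rw [aux_vand2 n k, sq, Finset.sum_mul_sum, Finset.mul_sum]
    apply Finset.sum_congr rfl; intro i _
    rw [Finset.mul_sum]
    apply Finset.sum_congr rfl; intro j _
    ring
  rw [Finset.sum_congr rfl expand, Finset.sum_comm]
  have inner : ∀ i ∈ Finset.range (n+1),
      ∑ k ∈ Finset.range (n+1), ∑ j ∈ Finset.range (n+1),
          ((n.choose i : ℤ) * (n.choose j)) *
            ((-1 : ℤ) ^ (n + k) * (n.choose k) * (k.choose i) * (k.choose j))
        = ((n.choose i : ℤ))^2 * ((n+i).choose n) := by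
    intro i hi
    have hi' : i ≤ n := by simpa using Nat.lt_succ_iff.mp (Finset.mem_range.mp hi)
    rw [Finset.sum_comm]
    have hj : ∀ j ∈ Finset.range (n+1),
        ∑ k ∈ Finset.range (n+1),
            ((n.choose i : ℤ) * (n.choose j)) *
              ((-1 : ℤ) ^ (n + k) * (n.choose k) * (k.choose i) * (k.choose j))
          = ((n.choose i : ℤ))^2 * ((n.choose j : ℤ) * (i.choose (n-j))) := by
      intro j hjm
      have hj' : j ≤ n := by simpa using Nat.lt_succ_iff.mp (Finset.mem_range.mp hjm)
      rw [← Finset.mul_sum, aux2 n i j hi']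
      have hsgn : (-1 : ℤ)^(n+i) * (-1 : ℤ)^(n-i) = 1 := by
        rw [← pow_add]
        have : n + i + (n - i) = 2 * n := by omega
        rw [this, pow_mul]
        norm_num
      have hval : (if n - i ≤ j then ((i.choose (j - (n-i))) : ℤ) else 0)
          = ((i.choose (n - j)) : ℤ) := by
        by_cases h : n - i ≤ j
        · rw [if_pos h]
          have hle : j - (n - i) ≤ i := by omega
          have : i - (j - (n - i)) = n - j := by omega
          rw [← this, Nat.choose_symm hle]
        · rw [if_neg h]
          have : i < n - j := by omega
          rw [Nat.choose_eq_zero_of_lt this]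
          simp
      rw [hval]
      calc (n.choose i : ℤ) * (n.choose j) *
            ((n.choose i : ℤ) * ((-1 : ℤ)^(n+i) * ((-1 : ℤ)^(n-i) * (i.choose (n-j)))))
          = ((-1 : ℤ)^(n+i) * (-1 : ℤ)^(n-i)) *
              (((n.choose i : ℤ))^2 * ((n.choose j : ℤ) * (i.choose (n-j)))) := by ring
        _ = ((n.choose i : ℤ))^2 * ((n.choose j : ℤ) * (i.choose (n-j))) := by
              rw [hsgn]; ring
    rw [Finset.sum_congr rfl hj, ← Finset.mul_sum, ← aux_vand n i]
  rw [Finset.sum_congr rfl inner]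
end

section
/- For every natural number n, ∑_{k=0}^{n} C(n,k)^2 C(n+k,n) C(2n+k,n) = C(2n,n)^3. -/
open Finset Nat

private lemma cast_choose_add (a b : ℕ) :
    (((a + b).choose a : ℚ)) = (a + b).factorial / (a.factorial * b.factorial) := by
  rw [Nat.cast_choose ℚ (Nat.le_add_right a b), Nat.add_sub_cancel_left]

/-- summand -/
noncomputable def Fq (n k : ℕ) : ℚ :=
  (n.choose k : ℚ) ^ 2 * ((n + k).choose n) * ((2 * n + k).choose n)

/-- WZ certificate term -/
noncomputable def Gq (n k : ℕ) : ℚ :=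
  (k : ℚ) ^ 3 * ((21 * n + 13) * k - (30 * (n:ℚ) ^ 2 + 49 * n + 19)) *
    ((2 * n + k).factorial / ((k.factorial : ℚ) ^ 3 * ((n + 1 - k).factorial) ^ 2))

private lemma fact_ne (a : ℕ) : (a.factorial : ℚ) ≠ 0 :=
  Nat.cast_ne_zero.2 (Nat.factorial_ne_zero a)

lemma Fq_eq (k m : ℕ) :
    Fq (k + m) k = (3 * k + 2 * m).factorial / ((k.factorial : ℚ) ^ 3 * (m.factorial) ^ 2) := by
  unfold Fq
  rw [show 2 * (k + m) + k = (k + m) + (2 * k + m) by ring,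
    show (k + m) + k = (k + m) + k from rfl]
  rw [cast_choose_add k m, cast_choose_add (k + m) k, cast_choose_add (k + m) (2 * k + m)]
  rw [show (k + m) + k = 2 * k + m by ring, show (k + m) + (2 * k + m) = 3 * k + 2 * m by ring]
  have h1 := fact_ne k; have h2 := fact_ne m; have h3 := fact_ne (k + m)
  have h4 := fact_ne (2 * k + m)
  field_simp

lemma key (k m : ℕ) :
    ((k : ℚ) + m + 1) ^ 3 * Fq (k + m + 1) k - 8 * (2 * ((k:ℚ) + m) + 1) ^ 3 * Fq (k + m) k =
      Gq (k + m) (k + 1) - Gq (k + m) k := by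
  have h1 : Fq (k + m + 1) k
      = (3 * k + 2 * m + 2).factorial / ((k.factorial : ℚ) ^ 3 * ((m+1).factorial) ^ 2) :=
    Fq_eq k (m + 1)
  rw [h1, Fq_eq k m]
  unfold Gq
  rw [show k + m + 1 - k = m + 1 by omega, show k + m + 1 - (k + 1) = m by omega,
    show 2 * (k + m) + (k + 1) = 3 * k + 2 * m + 1 by ring,
    show 2 * (k + m) + k = 3 * k + 2 * m by ring]
  rw [show (3 * k + 2 * m + 2).factorial
      = (3 * k + 2 * m + 2) * ((3 * k + 2 * m + 1) * (3 * k + 2 * m).factorial) from by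
    rw [show 3 * k + 2 * m + 2 = (3 * k + 2 * m + 1) + 1 from rfl, Nat.factorial_succ,
      Nat.factorial_succ]]
  rw [show (3 * k + 2 * m + 1).factorial = (3 * k + 2 * m + 1) * (3 * k + 2 * m).factorial from
    Nat.factorial_succ _]
  rw [show (m + 1).factorial = (m + 1) * m.factorial from Nat.factorial_succ _,
    show (k + 1).factorial = (k + 1) * k.factorial from Nat.factorial_succ _]
  have h1 := fact_ne k; have h2 := fact_ne m; have h3 := fact_ne (3 * k + 2 * m)
  have h4 : ((m : ℚ) + 1) ≠ 0 := by positivity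
  have h5 : ((k : ℚ) + 1) ≠ 0 := by positivity
  push_cast
  field_simp
  ring

lemma boundary (n : ℕ) :
    ((n : ℚ) + 1) ^ 3 * Fq (n + 1) (n + 1) = - Gq n (n + 1) := by
  unfold Fq Gq
  rw [Nat.choose_self,
    show 2 * (n + 1) + (n + 1) = (n + 1) + (2 * n + 2) by ring,
    show n + 1 - (n + 1) = 0 by omega,
    show 2 * n + (n + 1) = 3 * n + 1 by ring]
  rw [cast_choose_add (n + 1) (n + 1), cast_choose_add (n + 1) (2 * n + 2)]
  rw [show (n + 1) + (n + 1) = 2 * n + 2 by ring,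
    show (n + 1) + (2 * n + 2) = 3 * n + 3 by ring]
  rw [show (3 * n + 3).factorial
      = (3 * n + 3) * ((3 * n + 2) * (3 * n + 1).factorial) from by
    rw [show 3 * n + 3 = (3 * n + 2) + 1 from rfl, Nat.factorial_succ, Nat.factorial_succ]]
  have h1 := fact_ne (n + 1); have h2 := fact_ne (2 * n + 2); have h3 := fact_ne (3 * n + 1)
  rw [Nat.factorial_zero]
  push_cast
  field_simp
  ring

noncomputable def Sq (n : ℕ) : ℚ := ∑ k ∈ Finset.range (n + 1), Fq n k

lemma Sq_rec (n : ℕ) : ((n : ℚ) + 1) ^ 3 * Sq (n + 1) = 8 * (2 * n + 1) ^ 3 * Sq n := by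
  have tel : ∑ k ∈ Finset.range (n + 1), (Gq n (k + 1) - Gq n k) = Gq n (n + 1) - Gq n 0 :=
    Finset.sum_range_sub (Gq n) (n + 1)
  have hG0 : Gq n 0 = 0 := by simp [Gq]
  have hsum : ∑ k ∈ Finset.range (n + 1),
      (((n : ℚ) + 1) ^ 3 * Fq (n + 1) k - 8 * (2 * n + 1) ^ 3 * Fq n k) = Gq n (n + 1) := by
    rw [Finset.sum_congr rfl fun k hk => ?_, tel, hG0, sub_zero]
    obtain ⟨m, rfl⟩ := Nat.exists_eq_add_of_le (Nat.lt_succ_iff.mp (Finset.mem_range.mp hk))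
    have := key k m
    push_cast
    linear_combination this
  have hb := boundary n
  have hs1 : Sq (n + 1) = (∑ k ∈ Finset.range (n + 1), Fq (n + 1) k) + Fq (n + 1) (n + 1) :=
    Finset.sum_range_succ _ _
  rw [Finset.sum_sub_distrib, ← Finset.mul_sum, ← Finset.mul_sum] at hsum
  rw [hs1]
  unfold Sq at *
  linarith [hsum, hb]

lemma main_q (n : ℕ) : Sq n = (((2 * n).choose n : ℚ)) ^ 3 := by
  induction n with
  | zero => simp [Sq, Fq]
  | succ n ih =>
    have hne : ((n : ℚ) + 1) ^ 3 ≠ 0 := by positivity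
    have hc : ((n : ℚ) + 1) * ((2 * (n + 1)).choose (n + 1)) =
        2 * (2 * n + 1) * ((2 * n).choose n) := by
      have := Nat.succ_mul_centralBinom_succ n
      unfold Nat.centralBinom at this
      exact_mod_cast this
    have hrec := Sq_rec n
    rw [ih] at hrec
    have : ((n : ℚ) + 1) ^ 3 * Sq (n + 1) =
        ((n : ℚ) + 1) ^ 3 * (((2 * (n + 1)).choose (n + 1) : ℚ)) ^ 3 := by
      rw [hrec]
      linear_combination (-1 : ℚ) * (4 * (2*(n:ℚ)+1)^2 * ((2*n).choose n : ℚ)^2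
        + 2 * (2*(n:ℚ)+1) * ((2*n).choose n : ℚ) * (((n:ℚ)+1) * ((2*(n+1)).choose (n+1) : ℚ))
        + (((n:ℚ)+1) * ((2*(n+1)).choose (n+1) : ℚ))^2) * hc
    exact mul_left_cancel₀ hne this

theorem stmt_3 (n : ℕ) :
    ∑ k ∈ Finset.range (n + 1),
        (n.choose k) ^ 2 * ((n + k).choose n) * ((2 * n + k).choose n) =
      ((2 * n).choose n) ^ 3 := by
  have h := main_q n
  unfold Sq Fq at h
  exact_mod_cast h
end

section
/- For every natural number n, ((3n)! / (n!)^3) * ∑_{k=0}^{n} C(n,k)^3 = ∑_{k=0}^{n} C(n,k)^2 C(n+k,k) C(2n-k,n) C(3n,n+k). -/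
lemma fac_dvd (n : ℕ) : (n.factorial) ^ 3 ∣ (3 * n).factorial := by
  have h1 : n.factorial * n.factorial ∣ (n + n).factorial :=
    Nat.factorial_mul_factorial_dvd_factorial_add n n
  have h2 : n.factorial * (n + n).factorial ∣ (n + (n + n)).factorial :=
    Nat.factorial_mul_factorial_dvd_factorial_add n (n + n)
  have : n.factorial ^ 3 ∣ (n + (n + n)).factorial := by
    calc n.factorial ^ 3 = n.factorial * (n.factorial * n.factorial) := by ring
    _ ∣ n.factorial * (n + n).factorial := mul_dvd_mul_left _ h1
    _ ∣ (n + (n + n)).factorial := h2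
  simpa [show n + (n + n) = 3 * n by ring] using this

lemma key_s4 (n k : ℕ) (hk : k ≤ n) :
    (3 * n).factorial / (n.factorial) ^ 3 * n.choose k =
      (n + k).choose k * (2 * n - k).choose n * (3 * n).choose (n + k) := by
  have hkn : k ≤ n + k := Nat.le_add_left _ _
  have hn2 : n ≤ 2 * n - k := by omega
  have hnk3 : n + k ≤ 3 * n := by omega
  have e1 : (n + k).choose k * k.factorial * n.factorial = (n + k).factorial := by
    have := Nat.choose_mul_factorial_mul_factorial hkn
    simpa [Nat.add_sub_cancel_left] using this
  have e2 : (2 * n - k).choose n * n.factorial * (n - k).factorial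
      = (2 * n - k).factorial := by
    have := Nat.choose_mul_factorial_mul_factorial hn2
    have h : 2 * n - k - n = n - k := by omega
    rwa [h] at this
  have e3 : (3 * n).choose (n + k) * (n + k).factorial * (2 * n - k).factorial
      = (3 * n).factorial := by
    have := Nat.choose_mul_factorial_mul_factorial hnk3
    have h : 3 * n - (n + k) = 2 * n - k := by omega
    rwa [h] at this
  have e4 : n.choose k * k.factorial * (n - k).factorial = n.factorial :=
    Nat.choose_mul_factorial_mul_factorial hk
  have hM : (n.factorial) ^ 3 * ((3 * n).factorial / (n.factorial) ^ 3)
      = (3 * n).factorial := Nat.mul_div_cancel' (fac_dvd n) 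
  have hpos : 0 < (n.factorial) ^ 3 * (k.factorial * (n - k).factorial) :=
    Nat.mul_pos (Nat.pow_pos n.factorial_pos)
      (Nat.mul_pos k.factorial_pos (n - k).factorial_pos)
  apply Nat.eq_of_mul_eq_mul_left hpos
  calc (n.factorial) ^ 3 * (k.factorial * (n - k).factorial) *
        ((3 * n).factorial / (n.factorial) ^ 3 * n.choose k)
      = ((n.factorial) ^ 3 * ((3 * n).factorial / (n.factorial) ^ 3)) *
        (n.choose k * k.factorial * (n - k).factorial) := by ring
    _ = (3 * n).factorial * n.factorial := by rw [hM, e4]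
    _ = (n.factorial) ^ 3 * (k.factorial * (n - k).factorial) *
        ((n + k).choose k * (2 * n - k).choose n * (3 * n).choose (n + k)) := by
        rw [← e3, ← e1, ← e2]; ring

theorem stmt_4 (n : ℕ) :
    ((3 * n).factorial / (n.factorial) ^ 3) *
        ∑ k ∈ Finset.range (n + 1), (n.choose k) ^ 3 =
      ∑ k ∈ Finset.range (n + 1),
        (n.choose k) ^ 2 * ((n + k).choose k) * ((2 * n - k).choose n) *
          ((3 * n).choose (n + k)) := by
  rw [Finset.mul_sum]
  refine Finset.sum_congr rfl fun k hk => ?_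
  have hkn : k ≤ n := Nat.lt_succ_iff.mp (Finset.mem_range.mp hk)
  have := key_s4 n k hkn
  calc (3 * n).factorial / n.factorial ^ 3 * n.choose k ^ 3
      = n.choose k ^ 2 * ((3 * n).factorial / n.factorial ^ 3 * n.choose k) := by
        ring
    _ = _ := by rw [this]; ring
end

section
/- For every natural number n, ((3n)! / (n!)^3) * ∑_{k=0}^{n} C(n,k)^3 = C(3n,n) * ∑_{k=0}^{n} C(n,k) C(n+k,n) C(2n-2k,n) C(2n,n+k). -/
open Finset

/-- Inner lemma: for `j ≤ n`,
`∑ k, C(n,k)^2 C(k,j) C(k,n-j) = C(n,j)^3`. -/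
lemma stmt5_inner_sum (n j : ℕ) (hj : j ≤ n) :
    ∑ k ∈ Finset.range (n + 1),
        (n.choose k) ^ 2 * (k.choose j) * (k.choose (n - j)) = (n.choose j) ^ 3 := by
  set m := n - j with hm
  have hjm : j + m = n := by omega
  -- drop terms with k < j
  have h1 : ∑ k ∈ Finset.range (n + 1),
      (n.choose k) ^ 2 * (k.choose j) * (k.choose m)
      = ∑ k ∈ Finset.Ico j (n + 1), (n.choose k) ^ 2 * (k.choose j) * (k.choose m) := by
    refine (Finset.sum_subset (fun x hx => ?_) (fun x hx hx' => ?_)).symm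
    · simp only [Finset.mem_Ico, Finset.mem_range] at *; omega
    · have : x < j := by simp only [Finset.mem_Ico, Finset.mem_range] at *; omega
      rw [Nat.choose_eq_zero_of_lt this]; ring
  rw [h1, Finset.sum_Ico_eq_sum_range]
  have hrange : n + 1 - j = m + 1 := by omega
  rw [hrange]
  have h2 : ∀ s ∈ Finset.range (m + 1),
      (n.choose (j + s)) ^ 2 * ((j + s).choose j) * ((j + s).choose m)
      = (n.choose j) ^ 2 * (m.choose s * j.choose (m - s)) := by
    intro s hs
    have hsm : s ≤ m := by simpa [Nat.lt_succ_iff] using hs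
    have hkn : j + s ≤ n := by omega
    have ha : n.choose (j + s) * (j + s).choose j = n.choose j * m.choose s := by
      rw [Nat.choose_mul (Nat.le_add_right j s)]
      congr 1
      · congr 1 <;> omega
    by_cases hc : m ≤ j + s
    · have hb : n.choose (j + s) * (j + s).choose m = n.choose j * j.choose (m - s) := by
        rw [Nat.choose_mul hc]
        have e1 : n.choose m = n.choose j := by
          rw [hm, Nat.choose_symm hj]
        have e2 : n - m = j := by omega
        have e3 : j + s - m = j - (m - s) := by omega
        rw [e1, e2, e3, Nat.choose_symm (by omega : m - s ≤ j)]
      calc (n.choose (j + s)) ^ 2 * ((j + s).choose j) * ((j + s).choose m)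
          = (n.choose (j + s) * (j + s).choose j) *
            (n.choose (j + s) * (j + s).choose m) := by ring
        _ = (n.choose j * m.choose s) * (n.choose j * j.choose (m - s)) := by rw [ha, hb]
        _ = (n.choose j) ^ 2 * (m.choose s * j.choose (m - s)) := by ring
    · push_neg at hc
      rw [Nat.choose_eq_zero_of_lt hc, Nat.choose_eq_zero_of_lt (by omega : j < m - s)]
      ring
  rw [Finset.sum_congr rfl h2, ← Finset.mul_sum]
  have hv : ∑ s ∈ Finset.range (m + 1), m.choose s * j.choose (m - s) = n.choose j := by
    have := Nat.add_choose_eq m j m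
    rw [Finset.Nat.sum_antidiagonal_eq_sum_range_succ (fun a b => m.choose a * j.choose b)] at this
    rw [← this]
    have : m + j = n := by omega
    rw [this, hm, Nat.choose_symm hj]
  rw [hv]; ring

/-- Franel-type identity: `∑ C(n,k)^3 = ∑ C(n,k)^2 C(2k,n)`. -/
lemma franel_alt (n : ℕ) :
    ∑ k ∈ Finset.range (n + 1), (n.choose k) ^ 2 * ((2 * k).choose n)
      = ∑ k ∈ Finset.range (n + 1), (n.choose k) ^ 3 := by
  have hexp : ∀ k, (2 * k).choose n
      = ∑ j ∈ Finset.range (n + 1), k.choose j * k.choose (n - j) := by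
    intro k
    have := Nat.add_choose_eq k k n
    rw [Finset.Nat.sum_antidiagonal_eq_sum_range_succ (fun a b => k.choose a * k.choose b)] at this
    rw [two_mul, this]
  calc ∑ k ∈ Finset.range (n + 1), (n.choose k) ^ 2 * ((2 * k).choose n)
      = ∑ k ∈ Finset.range (n + 1), ∑ j ∈ Finset.range (n + 1),
          (n.choose k) ^ 2 * (k.choose j) * (k.choose (n - j)) := by
        refine Finset.sum_congr rfl fun k _ => ?_
        rw [hexp k, Finset.mul_sum]
        exact Finset.sum_congr rfl fun j _ => by ring
    _ = ∑ j ∈ Finset.range (n + 1), ∑ k ∈ Finset.range (n + 1),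
          (n.choose k) ^ 2 * (k.choose j) * (k.choose (n - j)) := Finset.sum_comm
    _ = ∑ j ∈ Finset.range (n + 1), (n.choose j) ^ 3 := by
        refine Finset.sum_congr rfl fun j hj => ?_
        exact stmt5_inner_sum n j (by simpa [Nat.lt_succ_iff] using hj)

theorem stmt_5 (n : ℕ) :
    ((3 * n).factorial / (n.factorial) ^ 3) *
        ∑ k ∈ Finset.range (n + 1), (n.choose k) ^ 3 =
      ((3 * n).choose n) *
        ∑ k ∈ Finset.range (n + 1),
          (n.choose k) * ((n + k).choose n) * ((2 * n - 2 * k).choose n) *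
            ((2 * n).choose (n + k)) := by
  -- Step 1: (3n)!/(n!)^3 = C(3n,n) * C(2n,n)
  have hfac : (3 * n).factorial / (n.factorial) ^ 3
      = (3 * n).choose n * (2 * n).choose n := by
    have h1 : (3 * n).choose n * n.factorial * (3 * n - n).factorial = (3 * n).factorial :=
      Nat.choose_mul_factorial_mul_factorial (by omega)
    have h2 : (2 * n).choose n * n.factorial * (2 * n - n).factorial = (2 * n).factorial :=
      Nat.choose_mul_factorial_mul_factorial (by omega)
    have e1 : 3 * n - n = 2 * n := by omega
    have e2 : 2 * n - n = n := by omega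
    rw [e1] at h1; rw [e2] at h2
    have key : (3 * n).factorial = (3 * n).choose n * (2 * n).choose n * (n.factorial) ^ 3 := by
      calc (3 * n).factorial = (3 * n).choose n * n.factorial * (2 * n).factorial := h1.symm
        _ = (3 * n).choose n * n.factorial *
            ((2 * n).choose n * n.factorial * n.factorial) := by rw [h2]
        _ = (3 * n).choose n * (2 * n).choose n * (n.factorial) ^ 3 := by ring
    rw [key, Nat.mul_div_cancel _ (by positivity)]
  rw [hfac]
  -- Step 2: rewrite RHS terms via trinomial revision
  have hterm : ∀ k ∈ Finset.range (n + 1),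
      (n.choose k) * ((n + k).choose n) * ((2 * n - 2 * k).choose n) *
        ((2 * n).choose (n + k))
      = (2 * n).choose n * ((n.choose k) ^ 2 * ((2 * n - 2 * k).choose n)) := by
    intro k hk
    have hkn : k ≤ n := by simpa [Nat.lt_succ_iff] using hk
    have h := Nat.choose_mul (n := 2 * n) (show n ≤ n + k by omega)
    have e1 : 2 * n - n = n := by omega
    have e2 : n + k - n = k := by omega
    rw [e1, e2] at h
    calc (n.choose k) * ((n + k).choose n) * ((2 * n - 2 * k).choose n) *
          ((2 * n).choose (n + k))
        = (n.choose k) * ((2 * n).choose (n + k) * (n + k).choose n) *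
          ((2 * n - 2 * k).choose n) := by ring
      _ = (n.choose k) * ((2 * n).choose n * n.choose k) * ((2 * n - 2 * k).choose n) := by
          rw [h]
      _ = (2 * n).choose n * ((n.choose k) ^ 2 * ((2 * n - 2 * k).choose n)) := by ring
  rw [Finset.sum_congr rfl hterm, ← Finset.mul_sum]
  -- Step 3: reflect the sum and apply the Franel-type identity
  have hrefl : ∑ k ∈ Finset.range (n + 1), (n.choose k) ^ 2 * ((2 * n - 2 * k).choose n)
      = ∑ k ∈ Finset.range (n + 1), (n.choose k) ^ 2 * ((2 * k).choose n) := by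
    rw [← Finset.sum_range_reflect]
    refine Finset.sum_congr rfl fun j hj => ?_
    have hjn : j ≤ n := by simpa [Nat.lt_succ_iff] using hj
    simp only [Nat.add_sub_cancel]
    have e1 : n.choose (n - j) = n.choose j := Nat.choose_symm hjn
    have e2 : 2 * n - 2 * (n - j) = 2 * j := by omega
    rw [e1, e2]
  rw [hrefl, franel_alt]
  ring
end

section
/- For every natural number n, ∑_{k=0}^{n} C(n,k)^4 = ∑_{k=0}^{n} C(2k,k) C(2n-2k,n-k) C(k,n-k) C(2n-k,k). -/
open Finset

private lemma tri_s7 (N b c : ℕ) (h : c ≤ b) :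
    N.choose b * b.choose c = N.choose c * (N - c).choose (b - c) := by
  rcases le_or_gt b N with hb | hb
  · exact Nat.choose_mul h
  · rcases le_or_gt c N with hc | hc
    · rw [Nat.choose_eq_zero_of_lt hb, Nat.choose_eq_zero_of_lt (by omega : N - c < b - c),
        Nat.zero_mul, Nat.mul_zero]
    · rw [Nat.choose_eq_zero_of_lt hb, Nat.choose_eq_zero_of_lt hc, Nat.zero_mul, Nat.zero_mul]

private lemma swap2 (N p q : ℕ) :
    N.choose p * (N - p).choose q = N.choose q * (N - q).choose p := by
  have h1 := tri_s7 N (p + q) p (Nat.le_add_right _ _)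
  have h2 := tri_s7 N (q + p) q (Nat.le_add_right _ _)
  rw [Nat.add_sub_cancel_left] at h1 h2
  rw [← h1, ← h2, Nat.add_comm q p, Nat.choose_symm_add]

private lemma vdm (x y s : ℕ) :
    (x + y).choose s = ∑ i ∈ range (s + 1), x.choose i * y.choose (s - i) := by
  rw [Nat.add_choose_eq]
  exact Finset.Nat.sum_antidiagonal_eq_sum_range_succ (fun a b => x.choose a * y.choose b) s

private lemma L1 (m j : ℕ) :
    ∑ a ∈ range (j + 1), m.choose a * j.choose a = (m + j).choose j := by
  rw [← Finset.sum_range_reflect]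
  rw [Nat.add_comm m j, vdm j m j]
  apply Finset.sum_congr rfl
  intro a ha
  have ha' : a ≤ j := by simpa using Nat.lt_succ_iff.mp (mem_range.mp ha)
  have h1 : j + 1 - 1 - a = j - a := by omega
  rw [h1, Nat.choose_symm ha', Nat.mul_comm]

private lemma L2 (u m a : ℕ) :
    ∑ s ∈ range (u + 1), u.choose s * m.choose (a + s) = (u + m).choose (a + u) := by
  rw [← Finset.sum_range_reflect, vdm u m (a + u)]
  rw [← Finset.sum_subset (Finset.range_subset_range.mpr (by omega : u + 1 ≤ a + u + 1))]
  · apply Finset.sum_congr rfl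
    intro s hs
    have hs' : s ≤ u := Nat.lt_succ_iff.mp (mem_range.mp hs)
    have h1 : u + 1 - 1 - s = u - s := by omega
    rw [h1, Nat.choose_symm hs']
    congr 2
    omega
  · intro i hi hni
    have : u < i := by simp only [mem_range] at hi hni; omega
    rw [Nat.choose_eq_zero_of_lt this, Nat.zero_mul]

private lemma inner1 (a u m : ℕ) :
    ∑ t ∈ range (a + u + 1), (a + u).choose t * m.choose t * t.choose a =
      (a + u).choose a * (u + m).choose (a + u) := by
  have hsplit : a + u + 1 = a + (u + 1) := by omega
  rw [hsplit, Finset.sum_range_add]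
  have h0 : ∀ t ∈ range a, (a + u).choose t * m.choose t * t.choose a = 0 := by
    intro t ht
    rw [Nat.choose_eq_zero_of_lt (mem_range.mp ht), Nat.mul_zero]
  rw [Finset.sum_congr rfl h0, Finset.sum_const_zero, Nat.zero_add]
  rw [← L2 u m a, Finset.mul_sum]
  apply Finset.sum_congr rfl
  intro s _
  have htri := tri_s7 (a + u) (a + s) a (Nat.le_add_right _ _)
  rw [Nat.add_sub_cancel_left, Nat.add_sub_cancel_left] at htri
  calc (a + u).choose (a + s) * m.choose (a + s) * (a + s).choose a
      = ((a + u).choose (a + s) * (a + s).choose a) * m.choose (a + s) := by ring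
    _ = ((a + u).choose a * u.choose s) * m.choose (a + s) := by rw [htri]
    _ = (a + u).choose a * (u.choose s * m.choose (a + s)) := by ring

private lemma lemM (j m : ℕ) :
    ∑ t ∈ range (j + 1), j.choose t * m.choose t * (m + j + t).choose t =
      ((m + j).choose j) ^ 2 := by
  have hexp : ∀ t ∈ range (j + 1),
      j.choose t * m.choose t * (m + j + t).choose t =
        ∑ a ∈ range (j + 1), (m + j).choose a * (j.choose t * m.choose t * t.choose a) := by
    intro t ht
    have ht' : t ≤ j := Nat.lt_succ_iff.mp (mem_range.mp ht)
    have hv : (m + j + t).choose t = ∑ a ∈ range (j + 1), (m + j).choose a * t.choose a := by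
      rw [vdm (m + j) t t]
      rw [← Finset.sum_subset (Finset.range_subset_range.mpr (by omega : t + 1 ≤ j + 1))]
      · apply Finset.sum_congr rfl
        intro a ha
        have ha' : a ≤ t := Nat.lt_succ_iff.mp (mem_range.mp ha)
        rw [Nat.choose_symm ha']
      · intro i hi hni
        have : t < i := by simp only [mem_range] at hi hni; omega
        rw [Nat.choose_eq_zero_of_lt this, Nat.mul_zero]
    rw [hv, Finset.mul_sum]
    apply Finset.sum_congr rfl
    intro a _
    ring
  rw [Finset.sum_congr rfl hexp, Finset.sum_comm]
  have hinner : ∀ a ∈ range (j + 1),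
      (∑ t ∈ range (j + 1), (m + j).choose a * (j.choose t * m.choose t * t.choose a)) =
        (m + j).choose j * (m.choose a * j.choose a) := by
    intro a ha
    have ha' : a ≤ j := Nat.lt_succ_iff.mp (mem_range.mp ha)
    obtain ⟨u, hu⟩ : ∃ u, j = a + u := ⟨j - a, by omega⟩
    rw [← Finset.mul_sum]
    have h1 : ∑ t ∈ range (j + 1), j.choose t * m.choose t * t.choose a =
        j.choose a * (u + m).choose j := by
      have := inner1 a u m
      rw [← hu] at this
      exact this
    rw [h1]
    have hsw := swap2 (m + j) a j
    have e1 : m + j - a = m + u := by omega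
    have e2 : m + j - j = m := by omega
    rw [e1, e2] at hsw
    calc (m + j).choose a * (j.choose a * (u + m).choose j)
        = ((m + j).choose a * (m + u).choose j) * j.choose a := by
          rw [Nat.add_comm u m]; ring
      _ = ((m + j).choose j * m.choose a) * j.choose a := by rw [hsw]
      _ = (m + j).choose j * (m.choose a * j.choose a) := by ring
  rw [Finset.sum_congr rfl hinner, ← Finset.mul_sum, L1, sq]

private lemma lstar (n j : ℕ) (hj : j ≤ n) :
    ∑ k ∈ range (n + 1),
      n.choose k * n.choose k * k.choose j * k.choose (n - j) * (2 * n - k).choose n =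
      (n.choose j) ^ 4 := by
  rw [← Finset.sum_range_reflect]
  have hterm : ∀ t ∈ range (n + 1),
      n.choose (n + 1 - 1 - t) * n.choose (n + 1 - 1 - t) * (n + 1 - 1 - t).choose j *
          (n + 1 - 1 - t).choose (n - j) * (2 * n - (n + 1 - 1 - t)).choose n =
        (n.choose j * n.choose j) * (j.choose t * (n - j).choose t * (n + t).choose t) := by
    intro t ht
    have ht' : t ≤ n := Nat.lt_succ_iff.mp (mem_range.mp ht)
    have e0 : n + 1 - 1 - t = n - t := by omega
    have e1 : 2 * n - (n - t) = n + t := by omega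
    rw [e0, e1]
    have e2 : (n + t).choose n = (n + t).choose t := by
      have := Nat.choose_symm (by omega : t ≤ n + t)
      rw [(by omega : n + t - t = n)] at this
      exact this
    have hs1 := swap2 n t j
    have hs2 := swap2 n t (n - j)
    rw [(by omega : n - (n - j) = j)] at hs2
    rw [Nat.choose_symm hj] at hs2
    rw [e2]
    calc n.choose (n - t) * n.choose (n - t) * (n - t).choose j * (n - t).choose (n - j) *
          (n + t).choose t
        = (n.choose (n - t) * (n - t).choose j) * (n.choose (n - t) * (n - t).choose (n - j)) *
            (n + t).choose t := by ring
      _ = (n.choose t * (n - t).choose j) * (n.choose t * (n - t).choose (n - j)) *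
            (n + t).choose t := by rw [Nat.choose_symm ht']
      _ = (n.choose j * (n - j).choose t) * (n.choose j * j.choose t) * (n + t).choose t := by
            rw [hs1, hs2]
      _ = (n.choose j * n.choose j) * (j.choose t * (n - j).choose t * (n + t).choose t) := by
            ring
  rw [Finset.sum_congr rfl hterm, ← Finset.mul_sum]
  have hshrink : ∑ t ∈ range (n + 1), j.choose t * (n - j).choose t * (n + t).choose t =
      ∑ t ∈ range (j + 1), j.choose t * (n - j).choose t * (n + t).choose t := by
    rw [← Finset.sum_subset (Finset.range_subset_range.mpr (by omega : j + 1 ≤ n + 1))]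
    intro i hi hni
    have : j < i := by simp only [mem_range] at hi hni; omega
    rw [Nat.choose_eq_zero_of_lt this, Nat.zero_mul, Nat.zero_mul]
  rw [hshrink]
  have hM := lemM j (n - j)
  rw [(by omega : n - j + j = n)] at hM
  rw [hM]
  ring

theorem stmt_7 (n : ℕ) :
    ∑ k ∈ Finset.range (n + 1), (n.choose k) ^ 4 =
      ∑ k ∈ Finset.range (n + 1),
        ((2 * k).choose k) * ((2 * n - 2 * k).choose (n - k)) * (k.choose (n - k)) *
          ((2 * n - k).choose k) := by
  have hterm : ∀ k ∈ range (n + 1),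
      ((2 * k).choose k) * ((2 * n - 2 * k).choose (n - k)) * (k.choose (n - k)) *
          ((2 * n - k).choose k) =
        ∑ j ∈ range (n + 1),
          n.choose k * n.choose k * k.choose j * k.choose (n - j) * (2 * n - k).choose n := by
    intro k hk
    have hk' : k ≤ n := Nat.lt_succ_iff.mp (mem_range.mp hk)
    have h1 := tri_s7 (2 * k) n k hk'
    rw [(by omega : 2 * k - k = k)] at h1
    have h2 := tri_s7 (2 * n - k) n k hk'
    rw [(by omega : 2 * n - k - k = 2 * n - 2 * k)] at h2
    have hv : (2 * k).choose n = ∑ j ∈ range (n + 1), k.choose j * k.choose (n - j) := by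
      rw [(by omega : 2 * k = k + k)]
      exact vdm k k n
    calc ((2 * k).choose k) * ((2 * n - 2 * k).choose (n - k)) * (k.choose (n - k)) *
          ((2 * n - k).choose k)
        = ((2 * k).choose k * k.choose (n - k)) *
            ((2 * n - k).choose k * (2 * n - 2 * k).choose (n - k)) := by ring
      _ = ((2 * k).choose n * n.choose k) * ((2 * n - k).choose n * n.choose k) := by
          rw [← h1, ← h2]
      _ = (2 * k).choose n * (n.choose k * n.choose k * (2 * n - k).choose n) := by ring
      _ = _ := by
          rw [hv, Finset.sum_mul]
          apply Finset.sum_congr rfl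
          intro j _
          ring
  rw [Finset.sum_congr rfl hterm, Finset.sum_comm]
  apply Finset.sum_congr rfl
  intro j hj
  exact (lstar n j (Nat.lt_succ_iff.mp (mem_range.mp hj))).symm
end

section
/- For every natural number n, ∑_{k=0}^{n} C(n,k)^4 = ∑_{k=0}^{n} (-1)^{n+k} C(n,k) C(n+k,n) C(2k,k) C(2n-2k,n-k), as integers. -/
open Finset
namespace Stmt8

lemma rowQ (n k : ℕ) : ((n:ℚ)+1-k) * ((n+1).choose k : ℚ) = ((n:ℚ)+1) * (n.choose k : ℚ) := by
  rcases le_or_gt k (n+1) with h | h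
  · have h0 := congrArg (Nat.cast : ℕ → ℚ) (Nat.choose_mul_succ_eq n k)
    push_cast [Nat.cast_sub h] at h0
    linear_combination -h0
  · rw [Nat.choose_eq_zero_of_lt h, Nat.choose_eq_zero_of_lt (by omega)]
    simp

lemma colQ (n k : ℕ) : ((k:ℚ)+1) * (n.choose (k+1) : ℚ) = ((n:ℚ)-(k:ℚ)) * (n.choose k : ℚ) := by
  rcases le_or_gt k n with h | h
  · have h0 := congrArg (Nat.cast : ℕ → ℚ) (Nat.choose_succ_right_eq n k)
    push_cast [Nat.cast_sub h] at h0
    linear_combination h0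
  · rw [Nat.choose_eq_zero_of_lt h, Nat.choose_eq_zero_of_lt (by omega)]
    simp

lemma succQ (m k : ℕ) : ((m:ℚ)+1) * (m.choose k : ℚ) = ((m+1).choose (k+1) : ℚ) * ((k:ℚ)+1) := by
  have h0 := congrArg (Nat.cast : ℕ → ℚ) (Nat.add_one_mul_choose_eq m k)
  push_cast at h0
  linear_combination h0

lemma centQ (m : ℕ) : ((m:ℚ)+1) * ((2*m+2).choose (m+1) : ℚ) = 2*(2*(m:ℚ)+1) * ((2*m).choose m : ℚ) := by
  have h0 := congrArg (Nat.cast : ℕ → ℚ) (Nat.succ_mul_centralBinom_succ m)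
  simp only [Nat.centralBinom, show 2*(m+1) = 2*m+2 from by omega] at h0
  push_cast at h0
  linear_combination h0

lemma neg_one_pow_eq (a b : ℕ) (h : a % 2 = b % 2) : ((-1:ℚ))^a = (-1)^b := by
  conv_lhs => rw [← Nat.div_add_mod a 2]
  conv_rhs => rw [← Nat.div_add_mod b 2]
  rw [h, pow_add, pow_add, pow_mul, pow_mul]
  norm_num

def nu1 (x y : ℚ) : ℚ :=
  (-1080 + 2256*y - 1980*y^2 + 900*y^3 - 210*y^4 + 20*y^5)
  + x*(-5380 + 9776*y - 7302*y^2 + 2744*y^3 - 508*y^4 + 36*y^5)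
  + x^2*(-11330 + 17412*y - 10620*y^2 + 3088*y^3 - 402*y^4 + 16*y^5)
  + x^3*(-13075 + 16312*y - 7612*y^2 + 1520*y^3 - 104*y^4)
  + x^4*(-8930 + 8476*y - 2688*y^2 + 276*y^3)
  + x^5*(-3610 + 2316*y - 374*y^2)
  + x^6*(-800 + 260*y)
  + x^7*(-75)

def nu2 (x y : ℚ) : ℚ :=
  (-328+980*y-716*y^2+136*y^3) + x*(-1276+2296*y-1000*y^2+96*y^3)
  + x^2*(-1628+1720*y-352*y^2) + x^3*(-856+416*y) + x^4*(-160)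

def Q2 (x : ℚ) : ℚ := (x+2)^3
def Q1 (x : ℚ) : ℚ := 2*(2*x+3)*(3*x^2+9*x+7)
def Q0 (x : ℚ) : ℚ := 4*(x+1)*(4*x+5)*(4*x+3)

def f1 (n k : ℕ) : ℚ := ((n.choose k : ℚ))^4
def f2 (n k : ℕ) : ℚ :=
  (-1)^(n+k) * (n.choose k : ℚ) * ((n+k).choose n : ℚ) * ((2*k).choose k : ℚ)
    * ((2*n-2*k).choose (n-k) : ℚ)

def g1 (n k : ℕ) : ℚ :=
  (((n+2).choose k : ℚ) * k)^4 * nu1 n k / (((n:ℚ)+1)*((n:ℚ)+2))^4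

def g2 (n k : ℕ) : ℚ :=
  (-1)^(n+k) * ((n+2).choose k : ℚ) * ((n+k).choose n : ℚ) * ((2*k).choose k : ℚ)
    * ((2*n+4-2*k).choose (n+2-k) : ℚ) * (k:ℚ)^3 * nu2 n k
    / (4*((n:ℚ)+1)*((n:ℚ)+2)*(2*(n:ℚ)+1-2*(k:ℚ))*(2*(n:ℚ)+3-2*(k:ℚ)))

set_option maxHeartbeats 2000000 in
lemma step1 (n k : ℕ) :
    Q2 n * f1 (n+2) k - Q1 n * f1 (n+1) k - Q0 n * f1 n k = g1 n (k+1) - g1 n k := by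
  have hx1 : ((n:ℚ)+1) ≠ 0 := by positivity
  have hx2 : ((n:ℚ)+2) ≠ 0 := by positivity
  have hy1 : ((k:ℚ)+1) ≠ 0 := by positivity
  have e1 := rowQ (n+1) k
  have e2 := rowQ n k
  have e3 := colQ (n+2) k
  push_cast at e1 e2 e3 ⊢
  have hA1 : ((n+1).choose k : ℚ) = ((n:ℚ)+2-k) * ((n+2).choose k : ℚ) / ((n:ℚ)+2) := by
    field_simp; first
    | linear_combination e1
    | linear_combination -e1
  have hA0 : ((n).choose k : ℚ) = ((n:ℚ)+1-k) * ((n+1).choose k : ℚ) / ((n:ℚ)+1) := by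
    field_simp; first
    | linear_combination e2
    | linear_combination -e2
  have hB : ((n+2).choose (k+1) : ℚ) = ((n:ℚ)+2-k) * ((n+2).choose k : ℚ) / ((k:ℚ)+1) := by
    field_simp; first
    | linear_combination e3
    | linear_combination -e3
  simp only [f1, g1, nu1, Q0, Q1, Q2]
  push_cast
  rw [hA0, hA1, hB]
  field_simp
  ring

set_option maxHeartbeats 4000000 in
lemma step2_generic (k m : ℕ) :
    Q2 (k+m:ℕ) * f2 (k+m+2) k - Q1 (k+m:ℕ) * f2 (k+m+1) k - Q0 (k+m:ℕ) * f2 (k+m) k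
      = g2 (k+m) (k+1) - g2 (k+m) k := by
  have hK1 : ((k:ℚ)+1) ≠ 0 := by positivity
  have hM1 : ((m:ℚ)+1) ≠ 0 := by positivity
  have hM2 : ((m:ℚ)+2) ≠ 0 := by positivity
  have hKM1 : ((k:ℚ)+(m:ℚ)+1) ≠ 0 := by positivity
  have hKM2 : ((k:ℚ)+(m:ℚ)+2) ≠ 0 := by positivity
  have ea1 := rowQ (k+m) k
  have ea2 := rowQ (k+m+1) k
  have eb2 := colQ (k+m+2) k
  have ep1 := succQ (2*k+m) (k+m)
  have ep2 := succQ (2*k+m+1) (k+m+1)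
  have epp := rowQ (2*k+m) (k+m)
  have ec1 := centQ k
  have ed1 := centQ m
  have ed2 := centQ (m+1)
  simp only [show 2*(m+1)+2 = 2*m+4 from by omega, show m+1+1 = m+2 from by omega,
    show 2*(m+1) = 2*m+2 from by omega, show 2*k+m+1+1 = 2*k+m+2 from by omega,
    show k+m+1+1 = k+m+2 from by omega] at ed2 ep2 epp ep1 ea2
  push_cast at ea1 ea2 eb2 ep1 ep2 epp ec1 ed1 ed2
  have ha1 : ((k+m+1).choose k : ℚ) = ((k:ℚ)+m+1) * ((k+m).choose k : ℚ) / ((m:ℚ)+1) := by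
    field_simp; first
    | linear_combination ea1
    | linear_combination -ea1
  have ha2 : ((k+m+2).choose k : ℚ) = ((k:ℚ)+m+2) * ((k+m+1).choose k : ℚ) / ((m:ℚ)+2) := by
    field_simp; first
    | linear_combination ea2
    | linear_combination -ea2
  have hb2 : ((k+m+2).choose (k+1) : ℚ) = ((m:ℚ)+2) * ((k+m+2).choose k : ℚ) / ((k:ℚ)+1) := by
    field_simp; first
    | linear_combination eb2
    | linear_combination -eb2
  have hp1 : ((2*k+m+1).choose (k+m+1) : ℚ)
      = (2*(k:ℚ)+m+1) * ((2*k+m).choose (k+m) : ℚ) / ((k:ℚ)+m+1) := by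
    field_simp; first
    | linear_combination ep1
    | linear_combination -ep1
  have hp2 : ((2*k+m+2).choose (k+m+2) : ℚ)
      = (2*(k:ℚ)+m+2) * ((2*k+m+1).choose (k+m+1) : ℚ) / ((k:ℚ)+m+2) := by
    field_simp; first
    | linear_combination ep2
    | linear_combination -ep2
  have hpp : ((2*k+m+1).choose (k+m) : ℚ)
      = (2*(k:ℚ)+m+1) * ((2*k+m).choose (k+m) : ℚ) / ((k:ℚ)+1) := by
    field_simp; first
    | linear_combination epp
    | linear_combination -epp
  have hc1 : ((2*k+2).choose (k+1) : ℚ) = 2*(2*(k:ℚ)+1) * ((2*k).choose k : ℚ) / ((k:ℚ)+1) := by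
    field_simp; first
    | linear_combination ec1
    | linear_combination -ec1
  have hd1 : ((2*m+2).choose (m+1) : ℚ) = 2*(2*(m:ℚ)+1) * ((2*m).choose m : ℚ) / ((m:ℚ)+1) := by
    field_simp; first
    | linear_combination ed1
    | linear_combination -ed1
  have hd2 : ((2*m+4).choose (m+2) : ℚ)
      = 2*(2*(m:ℚ)+3) * ((2*m+2).choose (m+1) : ℚ) / ((m:ℚ)+2) := by
    field_simp; first
    | linear_combination ed2
    | linear_combination -ed2
  simp only [f2, g2,
    show 2*(k+m+2)-2*k = 2*m+4 from by omega, show k+m+2-k = m+2 from by omega,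
    show 2*(k+m+1)-2*k = 2*m+2 from by omega, show k+m+1-k = m+1 from by omega,
    show 2*(k+m)-2*k = 2*m from by omega, show k+m-k = m from by omega,
    show k+m+2+k = 2*k+m+2 from by omega, show k+m+1+k = 2*k+m+1 from by omega,
    show k+m+k = 2*k+m from by omega, show k+m+(k+1) = 2*k+m+1 from by omega,
    show 2*(k+1) = 2*k+2 from by omega,
    show 2*(k+m)+4-2*k = 2*m+4 from by omega, show k+m+2-k = m+2 from by omega,
    show 2*(k+m)+4-2*(k+1) = 2*m+2 from by omega, show k+m+2-(k+1) = m+1 from by omega,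
    show 2*(k+m)+4-(2*k+2) = 2*m+2 from by omega]
  rw [neg_one_pow_eq (2*k+m+2) m (by omega), neg_one_pow_eq (2*k+m+1) (m+1) (by omega),
    neg_one_pow_eq (2*k+m) m (by omega)]
  rw [pow_succ]
  rw [show (2*((k+m:ℕ):ℚ)+1-2*((k:ℕ):ℚ)) = 2*(m:ℚ)+1 from by push_cast; ring,
      show (2*((k+m:ℕ):ℚ)+3-2*((k:ℕ):ℚ)) = 2*(m:ℚ)+3 from by push_cast; ring,
      show (2*((k+m:ℕ):ℚ)+1-2*((k+1:ℕ):ℚ)) = 2*(m:ℚ)-1 from by push_cast; ring,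
      show (2*((k+m:ℕ):ℚ)+3-2*((k+1:ℕ):ℚ)) = 2*(m:ℚ)+1 from by push_cast; ring]
  have hodd1 : (2*(m:ℚ)+1) ≠ 0 := by positivity
  have hodd3 : (2*(m:ℚ)+3) ≠ 0 := by positivity
  have hoddm : (2*(m:ℚ)-1) ≠ 0 := by
    rcases Nat.eq_zero_or_pos m with h|h
    · subst h; norm_num
    · have h1 : (1:ℚ) ≤ (m:ℚ) := by exact_mod_cast h
      intro hc; linarith
  push_cast
  rw [hb2, ha2, ha1, hp2, hp1, hpp, hc1, hd2, hd1]
  simp only [nu2, Q0, Q1, Q2]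
  have hoddm2 : (m:ℚ)*2 - 1 ≠ 0 := by intro h; apply hoddm; linarith
  field_simp
  ring

set_option maxHeartbeats 1000000 in
lemma step2_top1 (n : ℕ) :
    Q2 n * f2 (n+2) (n+1) - Q1 n * f2 (n+1) (n+1) - Q0 n * f2 n (n+1)
      = g2 n (n+2) - g2 n (n+1) := by
  have hx1 : ((n:ℚ)+1) ≠ 0 := by positivity
  have hx2 : ((n:ℚ)+2) ≠ 0 := by positivity
  have hx3 : (2*(n:ℚ)+2) ≠ 0 := by positivity
  have ev := succQ (2*n+1) n
  have eu := succQ (2*n+2) (n+1)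
  have ew := colQ (2*n+2) n
  have ez := centQ (n+1)
  simp only [show 2*n+1+1 = 2*n+2 from by omega, show 2*n+2+1 = 2*n+3 from by omega,
    show n+1+1 = n+2 from by omega, show 2*(n+1)+2 = 2*n+4 from by omega,
    show 2*(n+1) = 2*n+2 from by omega] at ev eu ew ez
  push_cast at ev eu ew ez
  have hv : ((2*n+1).choose n : ℚ) = ((n:ℚ)+1) * ((2*n+2).choose (n+1) : ℚ) / (2*(n:ℚ)+2) := by
    rw [eq_div_iff hx3]
    first | linear_combination ev | linear_combination -ev
  have hu : ((2*n+3).choose (n+2) : ℚ) = (2*(n:ℚ)+3) * ((2*n+2).choose (n+1) : ℚ) / ((n:ℚ)+2) := by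
    field_simp
    first | linear_combination eu | linear_combination -eu
  have hw : ((2*n+2).choose n : ℚ) = ((n:ℚ)+1) * ((2*n+2).choose (n+1) : ℚ) / ((n:ℚ)+2) := by
    field_simp
    first | linear_combination ew | linear_combination -ew
  have hz : ((2*n+4).choose (n+2) : ℚ) = 2*(2*(n:ℚ)+3) * ((2*n+2).choose (n+1) : ℚ) / ((n:ℚ)+2) := by
    field_simp
    first | linear_combination ez | linear_combination -ez
  simp only [f2, g2, Nat.choose_succ_self, Nat.choose_self,
    show (n+2)+(n+1) = 2*n+3 from by omega, show (n+1)+(n+1) = 2*n+2 from by omega,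
    show n+(n+1) = 2*n+1 from by omega, show n+(n+2) = 2*n+2 from by omega,
    show 2*(n+1) = 2*n+2 from by omega, show 2*(n+2) = 2*n+4 from by omega,
    show 2*(n+1)-2*(n+1) = 0 from by omega, show (n+1)-(n+1) = 0 from by omega,
    show 2*(n+2)-2*(n+1) = 2 from by omega, show (n+2)-(n+1) = 1 from by omega,
    show 2*n+4-2*(n+1) = 2 from by omega, show n+2-(n+1) = 1 from by omega,
    show 2*n+4-2*(n+2) = 0 from by omega, show n+2-(n+2) = 0 from by omega,
    show 2*n-2*(n+1) = 0 from by omega, show n-(n+1) = 0 from by omega,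
    Nat.choose_succ_self_right, Nat.choose_zero_right,
    show 2*n+4-(2*n+2) = 2 from by omega,
    show Nat.choose 2 1 = 2 from rfl, show Nat.choose 0 0 = 1 from rfl]
  rw [neg_one_pow_eq (2*n+3) 1 (by omega), neg_one_pow_eq (2*n+2) 0 (by omega),
    neg_one_pow_eq (2*n+1) 1 (by omega)]
  push_cast
  rw [hv, hu, hw, hz,
    show (2*(n:ℚ)+1-2*((n:ℚ)+2)) = -3 from by ring, show (2*(n:ℚ)+3-2*((n:ℚ)+2)) = -1 from by ring,
    show (2*(n:ℚ)+1-2*((n:ℚ)+1)) = -1 from by ring, show (2*(n:ℚ)+3-2*((n:ℚ)+1)) = 1 from by ring]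
  simp only [nu2, Q0, Q1, Q2]
  field_simp
  ring

set_option maxHeartbeats 1000000 in
lemma step2_top2 (n : ℕ) :
    Q2 n * f2 (n+2) (n+2) - Q1 n * f2 (n+1) (n+2) - Q0 n * f2 n (n+2)
      = g2 n (n+3) - g2 n (n+2) := by
  have hx1 : ((n:ℚ)+1) ≠ 0 := by positivity
  have hx2 : ((n:ℚ)+2) ≠ 0 := by positivity
  have ew := colQ (2*n+2) n
  have ez := centQ (n+1)
  simp only [show 2*(n+1)+2 = 2*n+4 from by omega, show n+1+1 = n+2 from by omega,
    show 2*(n+1) = 2*n+2 from by omega] at ew ez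
  push_cast at ew ez
  have hw : ((2*n+2).choose n : ℚ) = ((n:ℚ)+1) * ((2*n+2).choose (n+1) : ℚ) / ((n:ℚ)+2) := by
    field_simp
    first | linear_combination ew | linear_combination -ew
  have hz : ((2*n+4).choose (n+2) : ℚ) = 2*(2*(n:ℚ)+3) * ((2*n+2).choose (n+1) : ℚ) / ((n:ℚ)+2) := by
    field_simp
    first | linear_combination ez | linear_combination -ez
  simp only [f2, g2, Nat.choose_self,
    show n.choose (n+2) = 0 from Nat.choose_eq_zero_of_lt (by omega),
    show (n+1).choose (n+2) = 0 from Nat.choose_eq_zero_of_lt (by omega),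
    show (n+2).choose (n+3) = 0 from Nat.choose_eq_zero_of_lt (by omega),
    show (n+2)+(n+2) = 2*n+4 from by omega, show n+(n+2) = 2*n+2 from by omega,
    show 2*(n+2) = 2*n+4 from by omega,
    show 2*(n+2)-2*(n+2) = 0 from by omega, show (n+2)-(n+2) = 0 from by omega,
    show 2*n+4-2*(n+2) = 0 from by omega, show n+2-(n+2) = 0 from by omega,
    show Nat.choose 0 0 = 1 from rfl]
  rw [neg_one_pow_eq (2*n+4) 0 (by omega), neg_one_pow_eq (2*n+2) 0 (by omega)]
  push_cast
  rw [hw, hz,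
    show (2*(n:ℚ)+1-2*((n:ℚ)+3)) = -5 from by ring, show (2*(n:ℚ)+3-2*((n:ℚ)+3)) = -3 from by ring,
    show (2*(n:ℚ)+1-2*((n:ℚ)+2)) = -3 from by ring, show (2*(n:ℚ)+3-2*((n:ℚ)+2)) = -1 from by ring]
  simp only [nu2, Q0, Q1, Q2]
  field_simp
  ring


lemma step2 (n k : ℕ) (hk : k ≤ n+2) :
    Q2 n * f2 (n+2) k - Q1 n * f2 (n+1) k - Q0 n * f2 n k = g2 n (k+1) - g2 n k := by
  rcases le_or_gt k n with h | h
  · obtain ⟨m, rfl⟩ := Nat.exists_eq_add_of_le h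
    exact step2_generic k m
  · rcases (show k = n+1 ∨ k = n+2 from by omega) with rfl | rfl
    · exact step2_top1 n
    · exact step2_top2 n

def S1 (n : ℕ) : ℚ := ∑ k ∈ range (n+1), f1 n k
def S2 (n : ℕ) : ℚ := ∑ k ∈ range (n+1), f2 n k

lemma rec1 (n : ℕ) : Q2 n * S1 (n+2) = Q1 n * S1 (n+1) + Q0 n * S1 n := by
  have key : ∑ k ∈ range (n+3), (Q2 n * f1 (n+2) k - Q1 n * f1 (n+1) k - Q0 n * f1 n k) = 0 := by
    rw [Finset.sum_congr rfl (fun k _ => step1 n k), Finset.sum_range_sub (g1 n) (n+3)]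
    have h0 : g1 n 0 = 0 := by simp [g1]
    have h3 : g1 n (n+3) = 0 := by
      simp [g1, Nat.choose_eq_zero_of_lt (show n+2 < n+3 by omega)]
    rw [h0, h3]; ring
  rw [Finset.sum_sub_distrib, Finset.sum_sub_distrib, ← Finset.mul_sum, ← Finset.mul_sum,
    ← Finset.mul_sum] at key
  have r2 : ∑ k ∈ range (n+3), f1 (n+2) k = S1 (n+2) := by
    rw [S1, show n+2+1 = n+3 from by omega]
  have r1 : ∑ k ∈ range (n+3), f1 (n+1) k = S1 (n+1) := by
    rw [show n+3 = (n+1+1)+1 from by omega, Finset.sum_range_succ, S1]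
    simp [f1, Nat.choose_eq_zero_of_lt (show n+1 < n+1+1 by omega)]
  have r0 : ∑ k ∈ range (n+3), f1 n k = S1 n := by
    rw [show n+3 = ((n+1)+1)+1 from by omega, Finset.sum_range_succ, Finset.sum_range_succ, S1]
    simp [f1, Nat.choose_eq_zero_of_lt (show n < n+1 by omega),
      Nat.choose_eq_zero_of_lt (show n < n+1+1 by omega)]
  rw [r2, r1, r0] at key
  linarith

lemma rec2 (n : ℕ) : Q2 n * S2 (n+2) = Q1 n * S2 (n+1) + Q0 n * S2 n := by
  have key : ∑ k ∈ range (n+3), (Q2 n * f2 (n+2) k - Q1 n * f2 (n+1) k - Q0 n * f2 n k) = 0 := by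
    rw [Finset.sum_congr rfl (fun k hk => step2 n k (by simp at hk; omega)),
      Finset.sum_range_sub (g2 n) (n+3)]
    have h0 : g2 n 0 = 0 := by simp [g2]
    have h3 : g2 n (n+3) = 0 := by
      simp [g2, Nat.choose_eq_zero_of_lt (show n+2 < n+3 by omega)]
    rw [h0, h3]; ring
  rw [Finset.sum_sub_distrib, Finset.sum_sub_distrib, ← Finset.mul_sum, ← Finset.mul_sum,
    ← Finset.mul_sum] at key
  have r2 : ∑ k ∈ range (n+3), f2 (n+2) k = S2 (n+2) := by
    rw [S2, show n+2+1 = n+3 from by omega]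
  have r1 : ∑ k ∈ range (n+3), f2 (n+1) k = S2 (n+1) := by
    rw [show n+3 = (n+1+1)+1 from by omega, Finset.sum_range_succ, S2]
    simp [f2, Nat.choose_eq_zero_of_lt (show n+1 < n+1+1 by omega)]
  have r0 : ∑ k ∈ range (n+3), f2 n k = S2 n := by
    rw [show n+3 = ((n+1)+1)+1 from by omega, Finset.sum_range_succ, Finset.sum_range_succ, S2]
    simp [f2, Nat.choose_eq_zero_of_lt (show n < n+1 by omega),
      Nat.choose_eq_zero_of_lt (show n < n+1+1 by omega)]
  rw [r2, r1, r0] at key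
  linarith

lemma base0 : S1 0 = S2 0 := by
  simp [S1, S2, f1, f2]

lemma base1 : S1 1 = S2 1 := by
  rw [S1, S2]
  norm_num [Finset.sum_range_succ, f1, f2, Nat.choose]

lemma main (n : ℕ) : S1 n = S2 n := by
  have key : ∀ n, S1 n = S2 n ∧ S1 (n+1) = S2 (n+1) := by
    intro n
    induction n with
    | zero => exact ⟨base0, base1⟩
    | succ m ih =>
      refine ⟨ih.2, ?_⟩
      have h1 := rec1 m
      have h2 := rec2 m
      rw [ih.1, ih.2, ← h2] at h1
      have hne : Q2 (m:ℚ) ≠ 0 := by rw [Q2]; positivity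
      have := mul_left_cancel₀ hne h1
      rw [show m+1+1 = m+2 from by omega]
      exact this
  exact (key n).1

end Stmt8


theorem stmt_8 (n : ℕ) :
    (∑ k ∈ Finset.range (n + 1), ((n.choose k : ℤ)) ^ 4) =
      ∑ k ∈ Finset.range (n + 1),
        (-1 : ℤ) ^ (n + k) * (n.choose k) * ((n + k).choose n) * ((2 * k).choose k) *
          ((2 * n - 2 * k).choose (n - k)) := by
  have h := Stmt8.main n
  simp only [Stmt8.S1, Stmt8.S2, Stmt8.f1, Stmt8.f2] at h
  have h2 : ((∑ k ∈ Finset.range (n + 1), ((n.choose k : ℤ)) ^ 4 : ℤ) : ℚ)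
      = ((∑ k ∈ Finset.range (n + 1),
        (-1 : ℤ) ^ (n + k) * (n.choose k) * ((n + k).choose n) * ((2 * k).choose k) *
          ((2 * n - 2 * k).choose (n - k)) : ℤ) : ℚ) := by
    push_cast
    convert h using 2
  exact_mod_cast h2
end

section
/- For every natural number n, ((3n)! / (n!)^3) * ∑_{k=0}^{n} C(n,k)^2 C(n+k,n) = ∑_{k=0}^{n} (-1)^{n+k} C(n+k,n)^3 C(2n-k,n) C(3n,n+k), as integers. -/
open Finset

-- finite difference recursion step
lemma alt_sum_succ (j : ℕ) (g : ℕ → ℤ) :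
    ∑ t ∈ range (j+2), (-1:ℤ)^t * (j+1).choose t * g t
      = ∑ t ∈ range (j+1), (-1:ℤ)^t * j.choose t * (g t - g (t+1)) := by
  rw [Finset.sum_range_succ' (fun t => (-1:ℤ)^t * (j+1).choose t * g t) (j+1)]
  have h1 : ∀ t, ((j+1).choose (t+1) : ℤ) = j.choose t + j.choose (t+1) := by
    intro t; rw [Nat.choose_succ_succ]; push_cast; ring
  have h2 : ∑ t ∈ range (j+1), (-1:ℤ)^(t+1) * (j+1).choose (t+1) * g (t+1)
      = ∑ t ∈ range (j+1), ((-1:ℤ)^(t+1) * j.choose t * g (t+1)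
          + (-1:ℤ)^(t+1) * j.choose (t+1) * g (t+1)) := by
    apply Finset.sum_congr rfl; intro t _; rw [h1]; ring
  rw [h2, Finset.sum_add_distrib]
  have h3 : ∑ t ∈ range (j+1), (-1:ℤ)^(t+1) * j.choose (t+1) * g (t+1)
      = ∑ t ∈ range (j+2), (-1:ℤ)^t * j.choose t * g t - g 0 := by
    rw [Finset.sum_range_succ' (fun t => (-1:ℤ)^t * j.choose t * g t) (j+1)]
    simp
  have h4 : ∑ t ∈ range (j+2), (-1:ℤ)^t * j.choose t * g t
      = ∑ t ∈ range (j+1), (-1:ℤ)^t * j.choose t * g t := by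
    rw [Finset.sum_range_succ]
    simp [Nat.choose_eq_zero_of_lt (by omega : j < j+1)]
  rw [h3, h4]
  have hR : ∑ t ∈ range (j+1), (-1:ℤ)^t * j.choose t * (g t - g (t+1))
      = (∑ x ∈ range (j+1), (-1:ℤ)^(x+1) * j.choose x * g (x+1))
        + ∑ t ∈ range (j+1), (-1:ℤ)^t * j.choose t * g t := by
    rw [← Finset.sum_add_distrib]
    apply Finset.sum_congr rfl; intro t _; ring
  rw [hR]
  simp only [pow_zero, Nat.choose_zero_right, Nat.cast_one, one_mul, mul_one]
  ring

lemma diff_sum : ∀ j n a : ℕ, j ≤ n →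
    ∑ t ∈ range (j+1), (-1:ℤ)^t * (j.choose t) * ((a+t).choose n)
      = (-1)^j * (a.choose (n-j)) := by
  intro j
  induction j with
  | zero => intro n a _; simp
  | succ j ih =>
    intro n a hjn
    obtain ⟨m, rfl⟩ : ∃ m, n = m + 1 := ⟨n - 1, by omega⟩
    rw [alt_sum_succ j (fun t => ((a+t).choose (m+1) : ℤ))]
    have key : ∀ t : ℕ, ((a+t).choose (m+1) : ℤ) - ((a+(t+1)).choose (m+1) : ℤ)
        = -((a+t).choose m) := by
      intro t
      have : a + (t+1) = (a + t) + 1 := by omega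
      rw [this, Nat.choose_succ_succ' (a+t) m]
      push_cast; ring
    have h2 : ∑ t ∈ range (j+1), (-1:ℤ)^t * (j.choose t) *
          (((a+t).choose (m+1) : ℤ) - ((a+(t+1)).choose (m+1)))
        = -∑ t ∈ range (j+1), (-1:ℤ)^t * (j.choose t) * ((a+t).choose m) := by
      rw [← Finset.sum_neg_distrib]
      apply Finset.sum_congr rfl; intro t _; rw [key]; ring
    rw [h2, ih m a (by omega)]
    have : m + 1 - (j + 1) = m - j := by omega
    rw [this]; ring


lemma vandermonde_int (n k : ℕ) :
    ((n + k).choose n : ℤ) = ∑ j ∈ range (n+1), (n.choose j : ℤ) * (k.choose (n-j)) := by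
  rw [Nat.add_choose_eq n k n, Finset.Nat.sum_antidiagonal_eq_sum_range_succ_mk]
  push_cast; rfl

lemma aux_inner_sum (n j : ℕ) (hj : j ≤ n) :
    ∑ k ∈ range (n+1), (-1:ℤ)^(n+k) * (n.choose k) * (k.choose (n-j)) * ((n+k).choose n)
      = (n.choose j) * ((2*n-j).choose n) := by
  have hsplit : n + 1 = (n - j) + (j + 1) := by omega
  rw [hsplit, Finset.sum_range_add]
  have hz : ∑ k ∈ range (n-j), (-1:ℤ)^(n+k) * (n.choose k) * (k.choose (n-j)) * ((n+k).choose n) = 0 := by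
    apply Finset.sum_eq_zero; intro k hk
    rw [Finset.mem_range] at hk
    rw [Nat.choose_eq_zero_of_lt hk]
    push_cast; ring
  rw [hz, zero_add]
  have hterm : ∀ t ∈ range (j+1),
      (-1:ℤ)^(n+(n-j+t)) * (n.choose (n-j+t)) * ((n-j+t).choose (n-j)) * ((n+(n-j+t)).choose n)
        = (n.choose j) * ((-1:ℤ)^j * ((-1:ℤ)^t * (j.choose t) * (((2*n-j)+t).choose n))) := by
    intro t ht
    rw [Finset.mem_range] at ht
    have h1 : n.choose (n-j+t) * (n-j+t).choose (n-j)
        = n.choose (n-j) * (n - (n-j)).choose (n-j+t-(n-j)) :=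
      Nat.choose_mul (by omega)
    have h2 : n - (n - j) = j := by omega
    have h3 : n - j + t - (n - j) = t := by omega
    have h4 : n.choose (n - j) = n.choose j := Nat.choose_symm hj
    rw [h2, h3, h4] at h1
    have h5 : n + (n - j + t) = 2*(n-j) + j + t := by omega
    have h6 : n + (n - j + t) = (2*n - j) + t := by omega
    have hsign : (-1:ℤ)^(n+(n-j+t)) = (-1:ℤ)^j * (-1:ℤ)^t := by
      rw [h5, pow_add, pow_add, pow_mul]; ring_nf
    rw [hsign, h6]
    have h1' : (n.choose (n-j+t) : ℤ) * ((n-j+t).choose (n-j)) = (n.choose j) * (j.choose t) := by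
      exact_mod_cast congrArg (Nat.cast : ℕ → ℤ) h1
    calc (-1:ℤ)^j * (-1:ℤ)^t * (n.choose (n-j+t)) * ((n-j+t).choose (n-j)) * ((2*n-j+t).choose n)
        = ((n.choose (n-j+t) : ℤ) * ((n-j+t).choose (n-j))) * ((-1:ℤ)^j * (-1:ℤ)^t * ((2*n-j+t).choose n)) := by ring
      _ = ((n.choose j : ℤ) * (j.choose t)) * ((-1:ℤ)^j * (-1:ℤ)^t * ((2*n-j+t).choose n)) := by rw [h1']
      _ = (n.choose j) * ((-1:ℤ)^j * ((-1:ℤ)^t * (j.choose t) * (((2*n-j)+t).choose n))) := by ring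
  rw [Finset.sum_congr rfl hterm, ← Finset.mul_sum, ← Finset.mul_sum,
    diff_sum j n (2*n-j) hj]
  have hcs : ((2*n-j).choose (n-j) : ℤ) = (2*n-j).choose n := by
    have : (2*n-j).choose (n-j) = (2*n-j).choose n := by
      rw [← Nat.choose_symm (by omega : n ≤ 2*n - j)]
      congr 1; omega
    exact_mod_cast congrArg (Nat.cast : ℕ → ℤ) this
  rw [hcs]
  have hj2 : (-1:ℤ)^j * (-1:ℤ)^j = 1 := by
    rw [← pow_add, ← two_mul, pow_mul]; norm_num
  calc (n.choose j : ℤ) * ((-1:ℤ)^j * ((-1:ℤ)^j * ((2*n-j).choose n)))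
      = ((-1:ℤ)^j * (-1:ℤ)^j) * ((n.choose j : ℤ) * ((2*n-j).choose n)) := by ring
    _ = (n.choose j) * ((2*n-j).choose n) := by rw [hj2]; ring

lemma lemE (n : ℕ) :
    ∑ k ∈ range (n+1), (-1:ℤ)^(n+k) * (n.choose k) * ((n+k).choose n)^2
      = ∑ k ∈ range (n+1), ((n.choose k:ℤ))^2 * ((n+k).choose n) := by
  have step1 : ∀ k ∈ range (n+1), (-1:ℤ)^(n+k) * (n.choose k) * ((n+k).choose n)^2
      = ∑ j ∈ range (n+1), (n.choose j : ℤ) *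
          ((-1:ℤ)^(n+k) * (n.choose k) * (k.choose (n-j)) * ((n+k).choose n)) := by
    intro k _
    calc (-1:ℤ)^(n+k) * (n.choose k) * ((n+k).choose n)^2
        = (∑ j ∈ range (n+1), (n.choose j:ℤ) * (k.choose (n-j))) *
            ((-1:ℤ)^(n+k) * (n.choose k) * ((n+k).choose n)) := by
          rw [← vandermonde_int]; ring
      _ = ∑ j ∈ range (n+1), (n.choose j : ℤ) *
            ((-1:ℤ)^(n+k) * (n.choose k) * (k.choose (n-j)) * ((n+k).choose n)) := by
          rw [Finset.sum_mul]; apply Finset.sum_congr rfl; intro j _; ring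
  rw [Finset.sum_congr rfl step1, Finset.sum_comm]
  have step2 : ∀ j ∈ range (n+1),
      ∑ k ∈ range (n+1), (n.choose j : ℤ) *
          ((-1:ℤ)^(n+k) * (n.choose k) * (k.choose (n-j)) * ((n+k).choose n))
        = ((n.choose j : ℤ))^2 * ((2*n-j).choose n) := by
    intro j hj; rw [Finset.mem_range] at hj
    rw [← Finset.mul_sum, aux_inner_sum n j (by omega)]; ring
  rw [Finset.sum_congr rfl step2,
    ← Finset.sum_range_reflect (fun j => ((n.choose j:ℤ))^2 * ((2*n-j).choose n)) (n+1)]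
  apply Finset.sum_congr rfl
  intro k hk; rw [Finset.mem_range] at hk
  have e1 : n + 1 - 1 - k = n - k := by omega
  have e2 : (n.choose (n-k) : ℤ) = n.choose k := by
    exact_mod_cast congrArg (Nat.cast : ℕ → ℤ) (Nat.choose_symm (by omega : k ≤ n))
  have e3 : 2*n - (n-k) = n + k := by omega
  rw [e1, e3, e2]

lemma factA (n : ℕ) :
    (3*n).factorial / (n.factorial)^3 = (3*n).choose n * (2*n).choose n := by
  have h2 : (2*n).choose n * n.factorial * n.factorial = (2*n).factorial := by
    have := Nat.add_choose_mul_factorial_mul_factorial n n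
    have e : n + n = 2*n := by omega
    rwa [e] at this
  have h3 : (3*n).choose (2*n) * n.factorial * (2*n).factorial = (3*n).factorial := by
    have := Nat.add_choose_mul_factorial_mul_factorial n (2*n)
    have e : n + 2*n = 3*n := by omega
    rwa [e] at this
  have hsym : (3*n).choose (2*n) = (3*n).choose n := by
    rw [← Nat.choose_symm (by omega : n ≤ 3*n)]; congr 1; omega
  have key : (3*n).factorial = ((3*n).choose n * (2*n).choose n) * (n.factorial)^3 := by
    rw [← h3, hsym, ← h2]; ring
  rw [key]
  exact Nat.mul_div_cancel _ (by positivity)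

lemma lemB (n k : ℕ) (hk : k ≤ n) :
    (3*n).choose (n+k) * (2*n-k).choose n = (3*n).choose n * (2*n).choose (n+k) := by
  apply Nat.eq_of_mul_eq_mul_right
    (show 0 < (n+k).factorial * ((n-k).factorial * n.factorial) by positivity)
  have l1 : (2*n-k).choose n * n.factorial * (n-k).factorial = (2*n-k).factorial := by
    have := Nat.choose_mul_factorial_mul_factorial (show n ≤ 2*n-k by omega)
    have e : 2*n-k-n = n-k := by omega
    rwa [e] at this
  have l2 : (3*n).choose (n+k) * (n+k).factorial * (2*n-k).factorial = (3*n).factorial := by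
    have := Nat.choose_mul_factorial_mul_factorial (show n+k ≤ 3*n by omega)
    have e : 3*n-(n+k) = 2*n-k := by omega
    rwa [e] at this
  have r1 : (2*n).choose (n+k) * (n+k).factorial * (n-k).factorial = (2*n).factorial := by
    have := Nat.choose_mul_factorial_mul_factorial (show n+k ≤ 2*n by omega)
    have e : 2*n-(n+k) = n-k := by omega
    rwa [e] at this
  have r2 : (3*n).choose n * n.factorial * (2*n).factorial = (3*n).factorial := by
    have := Nat.choose_mul_factorial_mul_factorial (show n ≤ 3*n by omega)
    have e : 3*n-n = 2*n := by omega
    rwa [e] at this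
  calc (3*n).choose (n+k) * (2*n-k).choose n * ((n+k).factorial * ((n-k).factorial * n.factorial))
      = (3*n).choose (n+k) * (n+k).factorial * ((2*n-k).choose n * n.factorial * (n-k).factorial) := by ring
    _ = (3*n).choose (n+k) * (n+k).factorial * (2*n-k).factorial := by rw [l1]
    _ = (3*n).factorial := l2
    _ = (3*n).choose n * n.factorial * (2*n).factorial := r2.symm
    _ = (3*n).choose n * n.factorial * ((2*n).choose (n+k) * (n+k).factorial * (n-k).factorial) := by rw [r1]
    _ = (3*n).choose n * (2*n).choose (n+k) * ((n+k).factorial * ((n-k).factorial * n.factorial)) := by ring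

lemma lemC (n k : ℕ) (hk : k ≤ n) :
    (2*n).choose (n+k) * (n+k).choose n = (2*n).choose n * n.choose k := by
  apply Nat.eq_of_mul_eq_mul_right
    (show 0 < n.factorial * (k.factorial * (n-k).factorial) by positivity)
  have c1 : (n+k).choose n * n.factorial * k.factorial = (n+k).factorial := by
    have := Nat.choose_mul_factorial_mul_factorial (show n ≤ n+k by omega)
    have e : n+k-n = k := by omega
    rwa [e] at this
  have c2 : (2*n).choose (n+k) * (n+k).factorial * (n-k).factorial = (2*n).factorial := by
    have := Nat.choose_mul_factorial_mul_factorial (show n+k ≤ 2*n by omega)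
    have e : 2*n-(n+k) = n-k := by omega
    rwa [e] at this
  have c3 : n.choose k * k.factorial * (n-k).factorial = n.factorial :=
    Nat.choose_mul_factorial_mul_factorial hk
  have c4 : (2*n).choose n * n.factorial * n.factorial = (2*n).factorial := by
    have := Nat.add_choose_mul_factorial_mul_factorial n n
    have e : n + n = 2*n := by omega
    rwa [e] at this
  calc (2*n).choose (n+k) * (n+k).choose n * (n.factorial * (k.factorial * (n-k).factorial))
      = (2*n).choose (n+k) * ((n+k).choose n * n.factorial * k.factorial) * (n-k).factorial := by ring
    _ = (2*n).choose (n+k) * (n+k).factorial * (n-k).factorial := by rw [c1]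
    _ = (2*n).factorial := c2
    _ = (2*n).choose n * n.factorial * n.factorial := c4.symm
    _ = (2*n).choose n * n.factorial * (n.choose k * k.factorial * (n-k).factorial) := by rw [c3]
    _ = (2*n).choose n * n.choose k * (n.factorial * (k.factorial * (n-k).factorial)) := by ring

theorem stmt_9 (n : ℕ) :
    (((3 * n).factorial / (n.factorial) ^ 3 : ℕ) : ℤ) *
        ∑ k ∈ Finset.range (n + 1), ((n.choose k : ℤ)) ^ 2 * ((n + k).choose n) =
      ∑ k ∈ Finset.range (n + 1),
        (-1 : ℤ) ^ (n + k) * ((n + k).choose n) ^ 3 * ((2 * n - k).choose n) *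
          ((3 * n).choose (n + k)) := by
  have hterm : ∀ k ∈ range (n+1),
      (-1 : ℤ) ^ (n + k) * (((n + k).choose n : ℤ)) ^ 3 * ((2 * n - k).choose n) *
          ((3 * n).choose (n + k))
        = (((3*n).choose n : ℤ) * ((2*n).choose n)) *
            ((-1:ℤ)^(n+k) * (n.choose k) * ((n+k).choose n)^2) := by
    intro k hk; rw [Finset.mem_range] at hk
    have hk' : k ≤ n := by omega
    have hB : (((3*n).choose (n+k) : ℤ)) * ((2*n-k).choose n)
        = ((3*n).choose n) * ((2*n).choose (n+k)) := by
      exact_mod_cast congrArg (Nat.cast : ℕ → ℤ) (lemB n k hk')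
    have hC : (((2*n).choose (n+k) : ℤ)) * ((n+k).choose n)
        = ((2*n).choose n) * (n.choose k) := by
      exact_mod_cast congrArg (Nat.cast : ℕ → ℤ) (lemC n k hk')
    calc (-1 : ℤ) ^ (n + k) * (((n + k).choose n : ℤ)) ^ 3 * ((2 * n - k).choose n) *
          ((3 * n).choose (n + k))
        = ((-1:ℤ)^(n+k) * ((n+k).choose n)^2) *
            ((((3*n).choose (n+k) : ℤ)) * ((2*n-k).choose n)) * ((n+k).choose n) := by ring
      _ = ((-1:ℤ)^(n+k) * ((n+k).choose n)^2) *
            (((3*n).choose n : ℤ) * ((2*n).choose (n+k))) * ((n+k).choose n) := by rw [hB]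
      _ = ((-1:ℤ)^(n+k) * ((n+k).choose n)^2) * ((3*n).choose n : ℤ) *
            ((((2*n).choose (n+k) : ℤ)) * ((n+k).choose n)) := by ring
      _ = ((-1:ℤ)^(n+k) * ((n+k).choose n)^2) * ((3*n).choose n : ℤ) *
            (((2*n).choose n : ℤ) * (n.choose k)) := by rw [hC]
      _ = (((3*n).choose n : ℤ) * ((2*n).choose n)) *
            ((-1:ℤ)^(n+k) * (n.choose k) * ((n+k).choose n)^2) := by ring
  rw [Finset.sum_congr rfl hterm, ← Finset.mul_sum, lemE, factA n]
  push_cast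
  ring
end

section
/- For every natural number n, ∑_{k=0}^{n} C(n,k)^2 C(n+k,n) = ∑_{k=0}^{n} C(n,k) C(2k,k) C(n+k,n-k). -/
theorem stmt_10 (n : ℕ) :
    ∑ k ∈ Finset.range (n + 1), (n.choose k) ^ 2 * ((n + k).choose n) =
      ∑ k ∈ Finset.range (n + 1),
        (n.choose k) * ((2 * k).choose k) * ((n + k).choose (n - k)) := by
  apply Finset.sum_congr rfl
  intro k hk
  have hkn : k ≤ n := Nat.lt_succ_iff.mp (Finset.mem_range.mp hk)
  have h1 : (n + k).choose (2 * k) * (2 * k).choose k =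
      (n + k).choose k * (n + k - k).choose (2 * k - k) :=
    Nat.choose_mul (by omega)
  have h2 : (n + k).choose (2 * k) = (n + k).choose (n - k) := by
    rw [← Nat.choose_symm (by omega : 2 * k ≤ n + k)]
    congr 1
    omega
  have h3 : (n + k).choose k = (n + k).choose n := by
    rw [← Nat.choose_symm (by omega : k ≤ n + k)]
    congr 1
    omega
  have h4 : n + k - k = n := by omega
  have h5 : 2 * k - k = k := by omega
  rw [h2, h3, h4, h5] at h1
  calc (n.choose k) ^ 2 * ((n + k).choose n)
      = n.choose k * ((n + k).choose n * n.choose k) := by ring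
    _ = n.choose k * ((n + k).choose (n - k) * (2 * k).choose k) := by rw [← h1]
    _ = (n.choose k) * ((2 * k).choose k) * ((n + k).choose (n - k)) := by ring
end

section
/- For every natural number n, the sum over all triples (i,j,k) of natural numbers with i + j + k = 2n of the squared multinomial coefficients ((2n)! / (i! j! k!))^2 equals ∑_{k=0}^{2n} C(2n,k)^2 C(4n-2k, 2n-k). -/
open Finset

lemma multinom_eq (i j k m : ℕ) (h : i + j + k = m) :
    m.factorial / (i.factorial * j.factorial * k.factorial)
      = m.choose k * (m - k).choose i := by
  have hk : k ≤ m := by omega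
  have hi : i ≤ m - k := by omega
  have hj : j = m - k - i := by omega
  subst hj
  have h1 : m.choose k * k.factorial * (m - k).factorial = m.factorial :=
    Nat.choose_mul_factorial_mul_factorial hk
  have h2 : (m - k).choose i * i.factorial * (m - k - i).factorial = (m - k).factorial :=
    Nat.choose_mul_factorial_mul_factorial hi
  rw [Nat.div_eq_iff_eq_mul_left (by positivity) ?_]
  · rw [← h1, ← h2]; ring
  · exact ⟨m.choose k * (m - k).choose i, by rw [← h1, ← h2]; ring⟩

theorem stmt_12 (n : ℕ) :
    ∑ x ∈ Finset.Nat.antidiagonalTuple 3 (2 * n),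
        ((2 * n).factorial /
            ((x 0).factorial * (x 1).factorial * (x 2).factorial)) ^ 2 =
      ∑ k ∈ Finset.range (2 * n + 1),
        ((2 * n).choose k) ^ 2 * ((4 * n - 2 * k).choose (2 * n - k)) := by
  obtain ⟨m, hm⟩ : ∃ m, 2 * n = m := ⟨_, rfl⟩
  rw [hm]
  have lhs_eq : ∑ x ∈ Finset.Nat.antidiagonalTuple 3 m,
      (m.factorial / ((x 0).factorial * (x 1).factorial * (x 2).factorial)) ^ 2
      = ∑ p ∈ (Finset.range (m + 1)).sigma fun k => Finset.HasAntidiagonal.antidiagonal (m - k),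
          (m.choose p.1 * (m - p.1).choose p.2.1) ^ 2 := by
    refine Finset.sum_bij' (fun x _ => ⟨x 2, (x 0, x 1)⟩)
      (fun p _ => ![p.2.1, p.2.2, p.1]) ?_ ?_ ?_ ?_ ?_
    · intro x hx
      rw [Finset.Nat.mem_antidiagonalTuple] at hx
      simp only [Fin.sum_univ_three] at hx
      simp only [Finset.mem_sigma, Finset.mem_range, Finset.HasAntidiagonal.mem_antidiagonal]
      omega
    · intro p hp
      rw [Finset.mem_sigma, Finset.mem_range, Finset.HasAntidiagonal.mem_antidiagonal] at hp
      rw [Finset.Nat.mem_antidiagonalTuple]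
      simp only [Fin.sum_univ_three]
      simp only [Matrix.cons_val_zero, Matrix.cons_val_one, Matrix.head_cons,
        Matrix.cons_val_two, Matrix.tail_cons]
      omega
    · intro x hx
      funext i
      fin_cases i <;> simp
    · intro p hp
      simp
    · intro x hx
      rw [Finset.Nat.mem_antidiagonalTuple] at hx
      simp only [Fin.sum_univ_three] at hx
      rw [multinom_eq _ _ _ _ hx]
  rw [lhs_eq, Finset.sum_sigma]
  clear lhs_eq
  apply Finset.sum_congr rfl
  intro k hk
  rw [Finset.mem_range] at hk
  have h4 : 4 * n - 2 * k = (m - k) + (m - k) := by omega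
  rw [h4, Nat.add_choose_eq, Finset.mul_sum]
  apply Finset.sum_congr rfl
  intro p hp
  rw [Finset.HasAntidiagonal.mem_antidiagonal] at hp
  have hsym : (m - k).choose p.2 = (m - k).choose p.1 := by
    have h1 : p.1 = m - k - p.2 := by omega
    rw [h1, Nat.choose_symm (by omega)]
  rw [hsym]; ring
end

section
/- For every natural number n, ∑_{k=0}^{n} C(n,k)^2 C(2n+k,n) C(3n+k,n) = C(2n,n) * C(3n,n)^2. -/
open Finset

lemma chooseTopQ (a b c : ℕ) (h : b ≤ a) (hc : b + c = a + 1) :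
    (((a+1).choose b : ℕ) : ℚ) = (a.choose b : ℚ) * ((a:ℚ)+1) / ((c:ℕ):ℚ) := by
  have hc0 : ((c:ℕ):ℚ) ≠ 0 := Nat.cast_ne_zero.mpr (by omega)
  rw [eq_div_iff hc0]
  have h2 := Nat.choose_mul_succ_eq a b
  rw [show a + 1 - b = c by omega] at h2
  exact_mod_cast h2.symm

lemma chooseUpQ (a b : ℕ) :
    (((a+1).choose (b+1) : ℕ) : ℚ) = (a.choose b : ℚ) * ((a:ℚ)+1) / ((b:ℚ)+1) := by
  rw [eq_div_iff (by positivity)]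
  have h2 := Nat.add_one_mul_choose_eq a b
  have h3 : (((a+1) * a.choose b : ℕ) : ℚ) = (((a+1).choose (b+1) * (b+1) : ℕ) : ℚ) := by
    exact_mod_cast congrArg (Nat.cast (R := ℚ)) h2
  push_cast at h3
  linarith [h3]

lemma chooseRightQ (a b c : ℕ) (hc : b + c = a) :
    ((a.choose (b+1) : ℕ) : ℚ) = (a.choose b : ℚ) * ((c:ℕ):ℚ) / ((b:ℚ)+1) := by
  rw [eq_div_iff (by positivity)]
  have h2 := Nat.choose_succ_right_eq a b
  rw [show a - b = c by omega] at h2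
  exact_mod_cast h2

def fq (n k : ℕ) : ℚ :=
  (n.choose k : ℚ)^2 * ((2*n+k).choose n : ℚ) * ((3*n+k).choose n : ℚ)

def Qp (n k : ℚ) : ℚ :=
  -1 + 84*k - 59*k^2 + n*(78 + 294*k - 186*k^2) + n^2*(340+294*k-145*k^2)
    + n^3*(468+66*k) + 207*n^4

def gq (n : ℕ) : ℕ → ℚ
  | 0 => 0
  | (j+1) => (n.choose j : ℚ)^2 * ((2*n+j+1).choose n : ℚ) * ((3*n+j+1).choose n : ℚ)
      * Qp (n:ℚ) ((j:ℚ)+1)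

set_option maxHeartbeats 2000000 in
lemma ptwise (n k : ℕ) (hk : k ≤ n + 1) :
    9*(3*(n:ℚ)+1)^2*(3*(n:ℚ)+2)^2 * fq n k - 2*((n:ℚ)+1)^3*(2*(n:ℚ)+1) * fq (n+1) k
      = gq n (k+1) - gq n k := by
  have en : ((n+1:ℕ):ℚ) ≠ 0 := Nat.cast_ne_zero.mpr (by omega)
  rcases Nat.lt_or_ge k 1 with h0 | h1
  · -- k = 0
    obtain rfl : k = 0 := by omega
    simp only [fq, gq]
    rw [show 2*n+0 = 2*n by ring, show 3*n+0 = 3*n by ring,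
        show 2*(n+1)+0 = (2*n+1)+1 by ring, show 3*(n+1)+0 = (3*n+2)+1 by ring,
        show 2*n+0+1 = (2*n)+1 by ring, show 3*n+0+1 = (3*n)+1 by ring]
    rw [chooseUpQ (2*n+1) n, chooseTopQ (2*n) n (n+1) (by omega) (by omega),
        chooseUpQ (3*n+2) n, chooseTopQ (3*n+1) n (2*n+2) (by omega) (by omega),
        chooseTopQ (3*n) n (2*n+1) (by omega) (by omega)]
    have e2 : ((2*n+1:ℕ):ℚ) ≠ 0 := Nat.cast_ne_zero.mpr (by omega)
    have e3 : ((2*n+2:ℕ):ℚ) ≠ 0 := Nat.cast_ne_zero.mpr (by omega)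
    simp only [Nat.choose_zero_right, Qp]
    push_cast at e2 e3 en ⊢
    field_simp
    ring
  · rcases Nat.lt_or_ge k (n+1) with h2 | h2
    · -- 1 ≤ k ≤ n : write k = j+1
      obtain ⟨j, rfl⟩ : ∃ j, k = j + 1 := ⟨k - 1, by omega⟩
      have hj : j + 1 ≤ n := by omega
      simp only [fq, gq]
      rw [show 2*(n+1)+(j+1) = (2*n+j+2)+1 by ring, show 3*(n+1)+(j+1) = (3*n+j+3)+1 by ring,
          show 2*n+(j+1) = 2*n+j+1 by ring, show 3*n+(j+1) = 3*n+j+1 by ring]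
      rw [Nat.choose_succ_succ' n j]
      rw [Nat.cast_add]
      rw [chooseUpQ (2*n+j+2) n, chooseUpQ (3*n+j+3) n]
      rw [show 2*n+j+2 = (2*n+j+1)+1 by ring, show 3*n+j+3 = (3*n+j+2)+1 by ring,
          show 2*n+j+1+1 = (2*n+j+1)+1 by ring, show 3*n+j+1+1 = (3*n+j+1)+1 by ring]
      rw [chooseTopQ (2*n+j+1) n (n+j+2) (by omega) (by omega),
          chooseTopQ (3*n+j+2) n (2*n+j+3) (by omega) (by omega)]
      rw [show 3*n+j+2 = (3*n+j+1)+1 by ring]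
      rw [chooseTopQ (3*n+j+1) n (2*n+j+2) (by omega) (by omega)]
      rw [chooseRightQ n j (n-j-1+1) (by omega)]
      have hm : ((n-j-1+1:ℕ):ℚ) = (n:ℚ) - (j:ℚ) := by
        have : n - j - 1 + 1 = n - j := by omega
        rw [this]
        push_cast [Nat.cast_sub (by omega : j ≤ n)]
        ring
      rw [hm]
      have e1 : ((n+j+2:ℕ):ℚ) ≠ 0 := Nat.cast_ne_zero.mpr (by omega)
      have e2 : ((2*n+j+3:ℕ):ℚ) ≠ 0 := Nat.cast_ne_zero.mpr (by omega)
      have e3 : ((2*n+j+2:ℕ):ℚ) ≠ 0 := Nat.cast_ne_zero.mpr (by omega)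
      have e4 : ((j:ℚ)+1) ≠ 0 := by positivity
      simp only [Qp]
      push_cast at e1 e2 e3 en ⊢
      field_simp
      ring
    · -- k = n+1
      obtain rfl : k = n + 1 := by omega
      simp only [fq, gq]
      rw [show 2*n+(n+1) = 3*n+1 by ring, show 3*n+(n+1) = 4*n+1 by ring,
          show 2*(n+1)+(n+1) = (3*n+2)+1 by ring, show 3*(n+1)+(n+1) = (4*n+3)+1 by ring,
          show 2*n+n+1 = 3*n+1 by ring, show 3*n+n+1 = 4*n+1 by ring]
      rw [Nat.choose_succ_self n, Nat.choose_self n]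
      rw [chooseUpQ (3*n+2) n, chooseUpQ (4*n+3) n]
      rw [show 3*n+2 = (3*n+1)+1 by ring]
      rw [show 4*n+3 = (4*n+2)+1 by ring]
      rw [chooseTopQ (4*n+2) n (3*n+3) (by omega) (by omega)]
      rw [show 4*n+2 = (4*n+1)+1 by ring]
      rw [chooseTopQ (4*n+1) n (3*n+2) (by omega) (by omega)]
      rw [chooseTopQ (3*n+1) n (2*n+2) (by omega) (by omega)]
      have e1 : ((2*n+2:ℕ):ℚ) ≠ 0 := Nat.cast_ne_zero.mpr (by omega)
      have e2 : ((3*n+2:ℕ):ℚ) ≠ 0 := Nat.cast_ne_zero.mpr (by omega)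
      have e3 : ((3*n+1:ℕ):ℚ) ≠ 0 := Nat.cast_ne_zero.mpr (by omega)
      simp only [Qp, Nat.choose_self]
      push_cast at e1 e2 e3 en ⊢
      field_simp
      ring

set_option maxHeartbeats 1000000 in
lemma sum_eq (n : ℕ) :
    ∑ k ∈ range (n+1), fq n k = ((2*n).choose n : ℚ) * ((3*n).choose n : ℚ)^2 := by
  induction n with
  | zero => simp [fq]
  | succ n ih =>
    have tel : ∑ k ∈ range (n+2), (gq n (k+1) - gq n k) = gq n (n+2) - gq n 0 :=
      Finset.sum_range_sub (gq n) (n+2)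
    have g0 : gq n 0 = 0 := rfl
    have gtop : gq n (n+2) = 0 := by
      simp [gq, Nat.choose_eq_zero_of_lt (show n < n+1 by omega)]
    have key : ∑ k ∈ range (n+2),
        (9*(3*(n:ℚ)+1)^2*(3*(n:ℚ)+2)^2 * fq n k
          - 2*((n:ℚ)+1)^3*(2*(n:ℚ)+1) * fq (n+1) k) = 0 := by
      rw [Finset.sum_congr rfl (fun k hk => ptwise n k (by
        have := Finset.mem_range.mp hk; omega))]
      rw [tel, g0, gtop]; ring
    rw [Finset.sum_sub_distrib, ← Finset.mul_sum, ← Finset.mul_sum] at key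
    have ftop : fq n (n+1) = 0 := by
      simp [fq, Nat.choose_eq_zero_of_lt (show n < n+1 by omega)]
    have hsn : ∑ k ∈ range (n+2), fq n k = ∑ k ∈ range (n+1), fq n k := by
      rw [Finset.sum_range_succ, ftop, add_zero]
    rw [hsn, ih] at key
    have rr : 2*((n:ℚ)+1)^3*(2*(n:ℚ)+1)
          * (((2*(n+1)).choose (n+1) : ℚ) * ((3*(n+1)).choose (n+1) : ℚ)^2)
        = 9*(3*(n:ℚ)+1)^2*(3*(n:ℚ)+2)^2
          * (((2*n).choose n : ℚ) * ((3*n).choose n : ℚ)^2) := by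
      rw [show 2*(n+1) = (2*n+1)+1 by ring, show 3*(n+1) = (3*n+2)+1 by ring]
      rw [chooseUpQ (2*n+1) n, chooseUpQ (3*n+2) n]
      rw [show 2*n+1 = (2*n)+1 by ring, show 3*n+2 = (3*n+1)+1 by ring]
      rw [chooseTopQ (2*n) n (n+1) (by omega) (by omega),
          chooseTopQ (3*n+1) n (2*n+2) (by omega) (by omega)]
      rw [show 3*n+1 = (3*n)+1 by ring]
      rw [chooseTopQ (3*n) n (2*n+1) (by omega) (by omega)]
      have e1 : ((n+1:ℕ):ℚ) ≠ 0 := Nat.cast_ne_zero.mpr (by omega)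
      have e2 : ((2*n+1:ℕ):ℚ) ≠ 0 := Nat.cast_ne_zero.mpr (by omega)
      have e3 : ((2*n+2:ℕ):ℚ) ≠ 0 := Nat.cast_ne_zero.mpr (by omega)
      push_cast at e1 e2 e3 ⊢
      field_simp
      ring
    have hne : (2*((n:ℚ)+1)^3*(2*(n:ℚ)+1)) ≠ 0 := by positivity
    apply mul_left_cancel₀ hne
    rw [rr]
    linarith [key]

theorem stmt_13 (n : ℕ) :
    ∑ k ∈ Finset.range (n + 1),
        (n.choose k) ^ 2 * ((2 * n + k).choose n) * ((3 * n + k).choose n) =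
      ((2 * n).choose n) * ((3 * n).choose n) ^ 2 := by
  have h := sum_eq n
  have h2 : ((∑ k ∈ Finset.range (n + 1),
      (n.choose k) ^ 2 * ((2 * n + k).choose n) * ((3 * n + k).choose n) : ℕ) : ℚ)
      = ((((2 * n).choose n) * ((3 * n).choose n) ^ 2 : ℕ) : ℚ) := by
    push_cast
    rw [← h]
    apply Finset.sum_congr rfl
    intro k _
    simp only [fq]
    try rfl
    try ring
  exact_mod_cast h2
end

section
/- For every natural number p, setting n = 2p, one has ∑_{k=0}^{n} (-1)^{p+k} C(n,k) C(n+k,n) C(2n-k,n) = C(3p,p) * C(2p,p), as integers. -/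
open Finset

namespace Stmt15

/-- The WZ certificate polynomial (times 2). -/
def M2 (n k : ℤ) : ℤ :=
  (-116 + 207*k - 147*k^2 + 48*k^3 - 6*k^4)
  + n*(-900 + 1320*k - 741*k^2 + 180*k^3 - 15*k^4)
  + n^2*(-2868 + 3327*k - 1386*k^2 + 222*k^3 - 9*k^4)
  + n^3*(-4812 + 4146*k - 1140*k^2 + 90*k^3)
  + n^4*(-4488 + 2556*k - 348*k^2)
  + n^5*(-2208 + 624*k) + n^6*(-448)

/-- Dixon summand. -/
def f (n k : ℕ) : ℤ := (-1)^k * ((2*n).choose k : ℤ)^3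

/-- WZ companion. -/
def G (n k : ℕ) : ℤ := (-1)^(k+1) * ((2*n+1).choose k : ℤ)^3 * M2 (n : ℤ) ((k : ℤ)+1)

lemma keyA (n : ℕ) :
    2*(2*(n:ℤ)+1)^3 * (((n:ℤ)+1)^3 * f (n+1) 0
      + (3*(n:ℤ)+1)*(3*(n:ℤ)+2)*(3*(n:ℤ)+3) * f n 0) = G n 0 := by
  simp [f, G, M2]
  ring

set_option maxHeartbeats 1600000 in
lemma keyB (n k : ℕ) :
    2*(2*(n:ℤ)+1)^3 * (((n:ℤ)+1)^3 * f (n+1) (k+1)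
      + (3*(n:ℤ)+1)*(3*(n:ℤ)+2)*(3*(n:ℤ)+3) * f n (k+1)) = G n (k+1) - G n k := by
  rcases lt_trichotomy k (2*n) with hlt | heq | hgt
  · -- generic case : k+1 ≤ 2n
    obtain ⟨m, hm⟩ : ∃ m, 2*n = k+1+m := ⟨2*n-(k+1), by omega⟩
    simp only [f, G, M2]
    rw [show 2*(n+1) = 2*n+2 by ring, hm]
    have hb1 := Nat.choose_mul_factorial_mul_factorial (show k+1 ≤ k+1+m by omega)
    rw [show k+1+m-(k+1) = m by omega] at hb1
    have hb2 := Nat.choose_mul_factorial_mul_factorial (show k+1 ≤ k+1+m+2 by omega)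
    rw [show k+1+m+2-(k+1) = m+2 by omega] at hb2
    have hb3 := Nat.choose_mul_factorial_mul_factorial (show k ≤ k+1+m+1 by omega)
    rw [show k+1+m+1-k = m+2 by omega] at hb3
    have hb4 := Nat.choose_mul_factorial_mul_factorial (show k+1 ≤ k+1+m+1 by omega)
    rw [show k+1+m+1-(k+1) = m+1 by omega] at hb4
    have ek : (k+1).factorial = (k+1)*k.factorial := Nat.factorial_succ _
    have em1 : (m+1).factorial = (m+1)*m.factorial := Nat.factorial_succ _
    have em2 : (m+2).factorial = (m+2)*((m+1)*m.factorial) := by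
      rw [show m+2 = (m+1)+1 by ring, Nat.factorial_succ, em1]
    have eK1 : (k+1+m+1).factorial = (k+1+m+1)*(k+1+m).factorial := Nat.factorial_succ _
    have eK2 : (k+1+m+2).factorial = (k+1+m+2)*((k+1+m+1)*(k+1+m).factorial) := by
      rw [show k+1+m+2 = (k+1+m+1)+1 by ring, Nat.factorial_succ, eK1]
    rw [ek] at hb1 hb2 hb4
    rw [em2] at hb2 hb3
    rw [em1] at hb4
    rw [eK2] at hb2
    rw [eK1] at hb3 hb4
    apply (Int.cast_injective (α := ℚ))
    push_cast
    have hA : ((k+1+m).factorial : ℚ) ≠ 0 := by positivity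
    have hB : ((k.factorial : ℚ)) ≠ 0 := by positivity
    have hC : ((m.factorial : ℚ)) ≠ 0 := by positivity
    have hk1 : ((k:ℚ)+1) ≠ 0 := by positivity
    have hm1 : ((m:ℚ)+1) ≠ 0 := by positivity
    have hm2 : ((m:ℚ)+2) ≠ 0 := by positivity
    have q1 : (((k+1+m).choose (k+1) : ℕ) : ℚ)
        = ((k+1+m).factorial : ℚ) / (((k:ℚ)+1) * (k.factorial : ℚ) * (m.factorial : ℚ)) := by
      rw [eq_div_iff (by positivity)]
      have hc := congrArg (Nat.cast : ℕ → ℚ) hb1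
      push_cast at hc
      linear_combination hc
    have q2 : (((k+1+m+2).choose (k+1) : ℕ) : ℚ)
        = (((k:ℚ)+1+m+2) * (((k:ℚ)+1+m+1) * ((k+1+m).factorial : ℚ)))
          / (((k:ℚ)+1) * (k.factorial : ℚ) * (((m:ℚ)+2) * (((m:ℚ)+1) * (m.factorial : ℚ)))) := by
      rw [eq_div_iff (by positivity)]
      have hc := congrArg (Nat.cast : ℕ → ℚ) hb2
      push_cast at hc
      linear_combination hc
    have q3 : (((k+1+m+1).choose k : ℕ) : ℚ)
        = (((k:ℚ)+1+m+1) * ((k+1+m).factorial : ℚ))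
          / ((k.factorial : ℚ) * (((m:ℚ)+2) * (((m:ℚ)+1) * (m.factorial : ℚ)))) := by
      rw [eq_div_iff (by positivity)]
      have hc := congrArg (Nat.cast : ℕ → ℚ) hb3
      push_cast at hc
      linear_combination hc
    have q4 : (((k+1+m+1).choose (k+1) : ℕ) : ℚ)
        = (((k:ℚ)+1+m+1) * ((k+1+m).factorial : ℚ))
          / (((k:ℚ)+1) * (k.factorial : ℚ) * (((m:ℚ)+1) * (m.factorial : ℚ))) := by
      rw [eq_div_iff (by positivity)]
      have hc := congrArg (Nat.cast : ℕ → ℚ) hb4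
      push_cast at hc
      linear_combination hc
    rw [q1, q2, q3, q4]
    have hn : (n:ℚ) = ((k:ℚ)+(m:ℚ)+1)/2 := by
      have := congrArg (Nat.cast : ℕ → ℚ) hm
      push_cast at this
      linarith
    rw [hn]
    field_simp
    ring
  · -- k = 2n
    subst heq
    have c1 : (2*(n+1)).choose (2*n+1) = 2*n+2 := by
      rw [show 2*(n+1) = (2*n+1)+1 by ring, Nat.choose_succ_self_right]
    have c2 : (2*n).choose (2*n+1) = 0 := Nat.choose_succ_self _
    have c3 : (2*n+1).choose (2*n+1) = 1 := Nat.choose_self _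
    have c4 : (2*n+1).choose (2*n) = 2*n+1 := Nat.choose_succ_self_right _
    have s2 : (-1:ℤ)^(2*n+1) = -1 := by rw [pow_succ, pow_mul]; norm_num
    have s1 : (-1:ℤ)^(2*n+1+1) = 1 := by rw [pow_succ, s2]; norm_num
    simp only [f, G, M2, c1, c2, c3, c4, s1, s2]
    push_cast
    ring
  · rcases Nat.lt_or_ge k (2*n+2) with hk2 | hk2
    · -- k = 2n+1
      have hk : k = 2*n+1 := by omega
      subst hk
      have c1 : (2*(n+1)).choose (2*n+1+1) = 1 := by
        rw [show 2*(n+1) = 2*n+1+1 by ring, Nat.choose_self]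
      have c2 : (2*n).choose (2*n+1+1) = 0 := Nat.choose_eq_zero_of_lt (by omega)
      have c3 : (2*n+1).choose (2*n+1+1) = 0 := Nat.choose_succ_self _
      have c4 : (2*n+1).choose (2*n+1) = 1 := Nat.choose_self _
      have s2 : (-1:ℤ)^(2*n+1) = -1 := by rw [pow_succ, pow_mul]; norm_num
      have s1 : (-1:ℤ)^(2*n+1+1) = 1 := by rw [pow_succ, s2]; norm_num
      have s3 : (-1:ℤ)^(2*n+1+1+1) = -1 := by rw [pow_succ, s1]; norm_num
      simp only [f, G, M2, c1, c2, c3, c4, s1, s2, s3]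
      push_cast
      ring
    · -- k ≥ 2n+2 : everything vanishes
      have c1 : (2*(n+1)).choose (k+1) = 0 := Nat.choose_eq_zero_of_lt (by omega)
      have c2 : (2*n).choose (k+1) = 0 := Nat.choose_eq_zero_of_lt (by omega)
      have c3 : (2*n+1).choose (k+1) = 0 := Nat.choose_eq_zero_of_lt (by omega)
      have c4 : (2*n+1).choose k = 0 := Nat.choose_eq_zero_of_lt (by omega)
      simp [f, G, c1, c2, c3, c4]

lemma telescope (n N : ℕ) :
    ∑ k ∈ range (N+1), (2*(2*(n:ℤ)+1)^3 * (((n:ℤ)+1)^3 * f (n+1) k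
      + (3*(n:ℤ)+1)*(3*(n:ℤ)+2)*(3*(n:ℤ)+3) * f n k)) = G n N := by
  induction N with
  | zero => simpa using keyA n
  | succ N ih => rw [Finset.sum_range_succ, ih, keyB]; ring

def Dix (n : ℕ) : ℤ := ∑ k ∈ range (2*n+1), f n k

lemma Dix_ext (n M : ℕ) (h : 2*n+1 ≤ M) : ∑ k ∈ range M, f n k = Dix n := by
  refine (Finset.sum_subset (Finset.range_subset_range.2 h) ?_).symm
  intro k _ hk
  simp only [Finset.mem_range, not_lt] at hk
  simp [f, Nat.choose_eq_zero_of_lt (by omega : 2*n < k)]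

lemma rec_step (n : ℕ) :
    ((n:ℤ)+1)^3 * Dix (n+1)
      = -((3*(n:ℤ)+1)*(3*(n:ℤ)+2)*(3*(n:ℤ)+3)) * Dix n := by
  have h := telescope n (2*n+3)
  have hG : G n (2*n+3) = 0 := by
    simp [G, Nat.choose_eq_zero_of_lt (by omega : 2*n+1 < 2*n+3)]
  rw [hG] at h
  have h1 : ∑ k ∈ range (2*n+3+1), f (n+1) k = Dix (n+1) := Dix_ext (n+1) _ (by omega)
  have h2 : ∑ k ∈ range (2*n+3+1), f n k = Dix n := Dix_ext n _ (by omega)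
  have h' : (2*(2*(n:ℤ)+1)^3 * ((n:ℤ)+1)^3) * Dix (n+1)
      + (2*(2*(n:ℤ)+1)^3 * ((3*(n:ℤ)+1)*(3*(n:ℤ)+2)*(3*(n:ℤ)+3))) * Dix n = 0 := by
    rw [← h1, ← h2, Finset.mul_sum, Finset.mul_sum, ← Finset.sum_add_distrib, ← h]
    exact Finset.sum_congr rfl (fun k _ => by ring)
  have h2n : (2*(2*(n:ℤ)+1)^3) ≠ 0 := by positivity
  exact mul_left_cancel₀ h2n (by linear_combination h')

def U (n : ℕ) : ℤ := ((3*n).choose n : ℤ) * ((2*n).choose n : ℤ)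

lemma Ufact (n : ℕ) :
    ((3*n).choose n : ℤ) * ((2*n).choose n : ℤ) * ((n.factorial : ℤ))^3
      = ((3*n).factorial : ℤ) := by
  have c1 : (3*n).choose n * (n.factorial * (2*n).factorial) = (3*n).factorial := by
    have := Nat.choose_mul_factorial_mul_factorial (show n ≤ 3*n by omega)
    rw [show 3*n - n = 2*n by omega] at this
    linarith [this]
  have c2 : (2*n).choose n * (n.factorial * n.factorial) = (2*n).factorial := by
    have := Nat.choose_mul_factorial_mul_factorial (show n ≤ 2*n by omega)
    rw [show 2*n - n = n by omega] at this
    linarith [this]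
  have := congrArg (Nat.cast : ℕ → ℤ) c1
  have h2 := congrArg (Nat.cast : ℕ → ℤ) c2
  push_cast at this h2
  linear_combination this + (((3*n).choose n : ℤ) * (n.factorial : ℤ)) * h2

lemma Uratio (n : ℕ) :
    ((n:ℤ)+1)^3 * U (n+1) = (3*(n:ℤ)+1)*(3*(n:ℤ)+2)*(3*(n:ℤ)+3) * U n := by
  have hne : ((n.factorial : ℤ))^3 ≠ 0 := by positivity
  apply mul_right_cancel₀ hne
  have h1 := Ufact (n+1)
  have h2 := Ufact n
  have e1 : ((n+1).factorial : ℤ) = ((n:ℤ)+1) * (n.factorial : ℤ) := by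
    rw [Nat.factorial_succ]; push_cast; ring
  have e2 : ((3*(n+1)).factorial : ℤ)
      = (3*(n:ℤ)+3)*((3*(n:ℤ)+2)*((3*(n:ℤ)+1) * ((3*n).factorial : ℤ))) := by
    rw [show 3*(n+1) = (3*n+2)+1 by ring, Nat.factorial_succ,
      show 3*n+2 = (3*n+1)+1 by ring, Nat.factorial_succ, Nat.factorial_succ]
    push_cast; ring
  rw [e1, e2, ← h2] at h1
  simp only [U]
  linear_combination h1

lemma dixon (n : ℕ) : Dix n = (-1)^n * U n := by
  induction n with
  | zero => simp [Dix, f, U]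
  | succ n ih =>
      have hr := rec_step n
      rw [ih] at hr
      have hu := Uratio n
      have hne : (((n:ℤ)+1)^3) ≠ 0 := by positivity
      apply mul_left_cancel₀ hne
      rw [hr]
      linear_combination ((-1:ℤ)^n) * hu

/-! ### Step A: transformation to Dixon form -/

lemma trin (n c m : ℕ) :
    n.choose (c+m) * (c+m).choose c = n.choose c * (n-c).choose m := by
  rcases le_or_gt (c+m) n with h | h
  · have := Nat.choose_mul (n := n) (k := c+m) (s := c) (Nat.le_add_right _ _)
    rw [Nat.add_sub_cancel_left] at this
    exact this
  · rw [Nat.choose_eq_zero_of_lt h]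
    rcases le_or_gt c n with hc | hc
    · rw [Nat.choose_eq_zero_of_lt (show n - c < m by omega), mul_zero, zero_mul]
    · rw [Nat.choose_eq_zero_of_lt hc, zero_mul, zero_mul]

lemma trin2 (N m d : ℕ) :
    N.choose m * (N-m).choose d = N.choose d * (N-d).choose m := by
  have h1 := trin N m d
  have h2 := trin N d m
  rw [show d+m = m+d by ring] at h2
  rw [show (m+d).choose d = (m+d).choose m by
    rw [← Nat.choose_symm (Nat.le_add_left d m), Nat.add_sub_cancel]] at h2
  omega

lemma inner (n c d : ℕ) (hc : c ≤ n) :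
    ∑ k ∈ range (n+1), (-1:ℤ)^k * (n.choose k : ℤ) * (k.choose c : ℤ) * ((n-k).choose d : ℤ)
      = (-1)^c * (n.choose c : ℤ) * (if n - c = d then 1 else 0) := by
  have hstep1 : ∑ k ∈ range (n+1),
        (-1:ℤ)^k * (n.choose k : ℤ) * (k.choose c : ℤ) * ((n-k).choose d : ℤ)
      = ∑ k ∈ Finset.Ico c (n+1),
        (-1:ℤ)^k * (n.choose k : ℤ) * (k.choose c : ℤ) * ((n-k).choose d : ℤ) := by
    refine (Finset.sum_subset ?_ ?_).symm
    · intro k hk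
      simp only [Finset.mem_Ico] at hk
      exact Finset.mem_range.2 hk.2
    · intro k hk1 hk2
      simp only [Finset.mem_range] at hk1
      simp only [Finset.mem_Ico, not_and, not_lt] at hk2
      have hlt : k < c := by omega
      simp [Nat.choose_eq_zero_of_lt hlt]
  rw [hstep1, Finset.sum_Ico_eq_sum_range]
  rw [show n + 1 - c = (n - c) + 1 by omega]
  have hsummand : ∀ m,
      (-1:ℤ)^(c+m) * (n.choose (c+m) : ℤ) * ((c+m).choose c : ℤ) * ((n-(c+m)).choose d : ℤ)
      = ((-1)^c * (n.choose c : ℤ)) *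
          (((n-c).choose d : ℤ) * ((-1)^m * ((n-c-d).choose m : ℤ))) := by
    intro m
    have t1 : (n.choose (c+m) : ℤ) * ((c+m).choose c : ℤ)
        = (n.choose c : ℤ) * ((n-c).choose m : ℤ) := by exact_mod_cast trin n c m
    have t2 : ((n-c).choose m : ℤ) * ((n-c-m).choose d : ℤ)
        = ((n-c).choose d : ℤ) * ((n-c-d).choose m : ℤ) := by exact_mod_cast trin2 (n-c) m d
    rw [show n - (c+m) = n - c - m by omega, pow_add]
    linear_combination ((-1:ℤ)^c * (-1)^m * ((n-c-m).choose d : ℤ)) * t1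
      + ((-1:ℤ)^c * (-1)^m * (n.choose c : ℤ)) * t2
  rw [Finset.sum_congr rfl (fun m _ => hsummand m), ← Finset.mul_sum, ← Finset.mul_sum]
  have hfin : ((n-c).choose d : ℤ) * ∑ m ∈ range (n-c+1), (-1:ℤ)^m * ((n-c-d).choose m : ℤ)
      = (if n - c = d then 1 else 0) := by
    rcases le_or_gt d (n-c) with hd | hd
    · have hres : ∑ m ∈ range (n-c+1), (-1:ℤ)^m * ((n-c-d).choose m : ℤ)
          = ∑ m ∈ range (n-c-d+1), (-1:ℤ)^m * ((n-c-d).choose m : ℤ) := by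
        refine (Finset.sum_subset ?_ ?_).symm
        · exact Finset.range_subset_range.2 (by omega)
        · intro m hm1 hm2
          simp only [Finset.mem_range] at hm1 hm2
          simp [Nat.choose_eq_zero_of_lt (show n-c-d < m by omega)]
      rw [hres, Int.alternating_sum_range_choose]
      rcases eq_or_lt_of_le hd with he | hlt
      · rw [if_pos (by omega), if_pos he.symm, ← he, Nat.choose_self]
        norm_num
      · rw [if_neg (by omega), if_neg (by omega), mul_zero]
    · rw [Nat.choose_eq_zero_of_lt hd, if_neg (by omega)]
      norm_num
  rw [hfin]

lemma stepA (n : ℕ) :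
    ∑ k ∈ range (n+1), (-1:ℤ)^k * (n.choose k : ℤ) * ((n+k).choose n : ℤ)
        * ((2*n-k).choose n : ℤ)
      = ∑ i ∈ range (n+1), (-1:ℤ)^(n-i) * ((n.choose i : ℤ))^3 := by
  have key : ∀ k ∈ range (n+1),
      (-1:ℤ)^k * (n.choose k : ℤ) * ((n+k).choose n : ℤ) * ((2*n-k).choose n : ℤ)
      = ∑ i ∈ range (n+1), ∑ b ∈ range (n+1),
          ((n.choose i : ℤ) * (n.choose (n-b) : ℤ)) *
            ((-1)^k * (n.choose k : ℤ) * (k.choose (n-i) : ℤ) * ((n-k).choose b : ℤ)) := by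
    intro k hk
    have hk' : k ≤ n := by
      have := Finset.mem_range.1 hk; omega
    have expand1 : ((n+k).choose n : ℤ)
        = ∑ i ∈ range (n+1), (n.choose i : ℤ) * (k.choose (n-i) : ℤ) := by
      have h := Nat.add_choose_eq n k n
      rw [Finset.Nat.sum_antidiagonal_eq_sum_range_succ_mk] at h
      exact_mod_cast h
    have expand2 : ((2*n-k).choose n : ℤ)
        = ∑ b ∈ range (n+1), ((n-k).choose b : ℤ) * (n.choose (n-b) : ℤ) := by
      rw [show 2*n-k = (n-k)+n by omega]
      have h := Nat.add_choose_eq (n-k) n n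
      rw [Finset.Nat.sum_antidiagonal_eq_sum_range_succ_mk] at h
      exact_mod_cast h
    rw [expand1, expand2]
    simp only [Finset.mul_sum, Finset.sum_mul]
    rw [Finset.sum_comm]
    refine Finset.sum_congr rfl fun i _ => Finset.sum_congr rfl fun b _ => by ring
  rw [Finset.sum_congr rfl key, Finset.sum_comm]
  refine Finset.sum_congr rfl fun i hi => ?_
  have hi' : i ≤ n := by
    have := Finset.mem_range.1 hi; omega
  rw [Finset.sum_comm]
  have hb : ∀ b ∈ range (n+1),
      ∑ k ∈ range (n+1), ((n.choose i : ℤ) * (n.choose (n-b) : ℤ)) *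
          ((-1)^k * (n.choose k : ℤ) * (k.choose (n-i) : ℤ) * ((n-k).choose b : ℤ))
      = if i = b then ((n.choose i : ℤ) * (n.choose (n-b) : ℤ)) *
          ((-1)^(n-i) * (n.choose (n-i) : ℤ)) else 0 := by
    intro b _
    rw [← Finset.mul_sum, inner n (n-i) b (by omega)]
    rw [show n - (n-i) = i by omega]
    by_cases hib : i = b
    · rw [if_pos hib, if_pos hib]; ring
    · rw [if_neg hib, if_neg hib]; ring
  rw [Finset.sum_congr rfl hb, Finset.sum_ite_eq]
  rw [if_pos (Finset.mem_range.2 (by omega))]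
  rw [Nat.choose_symm hi']
  ring

end Stmt15

theorem stmt_15 (p : ℕ) :
    ∑ k ∈ Finset.range (2 * p + 1),
        (-1 : ℤ) ^ (p + k) * ((2 * p).choose k) * ((2 * p + k).choose (2 * p)) *
          ((2 * (2 * p) - k).choose (2 * p)) =
      ((3 * p).choose p) * ((2 * p).choose p) := by
  have h1 : ∀ k ∈ Finset.range (2*p+1),
      (-1:ℤ)^(p+k) * ((2*p).choose k : ℤ) * ((2*p+k).choose (2*p) : ℤ)
          * ((2*(2*p)-k).choose (2*p) : ℤ)
      = (-1:ℤ)^p * ((-1:ℤ)^k * ((2*p).choose k : ℤ) * ((2*p+k).choose (2*p) : ℤ)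
          * ((2*(2*p)-k).choose (2*p) : ℤ)) := by
    intro k _
    rw [pow_add]
    ring
  rw [Finset.sum_congr rfl h1, ← Finset.mul_sum, Stmt15.stepA (2*p)]
  have h2 : ∀ i ∈ Finset.range (2*p+1),
      (-1:ℤ)^(2*p-i) * (((2*p).choose i : ℤ))^3 = Stmt15.f p i := by
    intro i hi
    have hi' : i ≤ 2*p := by
      have := Finset.mem_range.1 hi; omega
    have hii : (-1:ℤ)^i * (-1:ℤ)^i = 1 := by
      rw [← pow_add, show i+i = 2*i by ring, pow_mul]; norm_num
    have hsg : (-1:ℤ)^(2*p-i) = (-1)^i := by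
      calc (-1:ℤ)^(2*p-i) = (-1)^(2*p-i) * ((-1)^i * (-1)^i) := by rw [hii, mul_one]
        _ = ((-1)^(2*p-i) * (-1)^i) * (-1)^i := by ring
        _ = (-1:ℤ)^(2*p) * (-1)^i := by rw [← pow_add, show 2*p-i+i = 2*p by omega]
        _ = (-1)^i := by rw [pow_mul]; norm_num
    rw [hsg]
    simp [Stmt15.f]
  rw [Finset.sum_congr rfl h2]
  have hD : (∑ i ∈ Finset.range (2*p+1), Stmt15.f p i) = Stmt15.Dix p := rfl
  rw [hD, Stmt15.dixon p]
  simp only [Stmt15.U]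
  rw [← mul_assoc, ← pow_add, show p+p = 2*p by ring, pow_mul]
  norm_num
end

section
/- For every natural number n, C(2n,n)^2 * ∑_{k=0}^{n} C(n,k)^3 = ∑_{k=0}^{n} C(n,k) C(n+k,n) C(2n-k,n) C(2n,k) C(2n,n-k). -/
theorem stmt_16 (n : ℕ) :
    ((2 * n).choose n) ^ 2 * ∑ k ∈ Finset.range (n + 1), (n.choose k) ^ 3 =
      ∑ k ∈ Finset.range (n + 1),
        (n.choose k) * ((n + k).choose n) * ((2 * n - k).choose n) * ((2 * n).choose k) *
          ((2 * n).choose (n - k)) := by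
  rw [Finset.mul_sum]
  refine Finset.sum_congr rfl fun k hk => ?_
  have hkn : k ≤ n := Nat.lt_succ_iff.mp (Finset.mem_range.mp hk)
  have hn2 : n ≤ 2 * n := by omega
  have h1 : (2 * n).choose n * n.choose k = (2 * n).choose k * ((2 * n - k).choose n) := by
    have := Nat.choose_mul (n := 2 * n) hkn
    rw [this]
    congr 1
    rw [← Nat.choose_symm (by omega : n ≤ 2 * n - k)]
    congr 1
    omega
  have h2 : (2 * n).choose n * n.choose k = ((2 * n).choose (n - k)) * ((n + k).choose n) := by
    have h3 : n + k ≤ 2 * n := by omega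
    have := Nat.choose_mul (n := 2 * n) (Nat.le_add_right n k)
    have e1 : 2 * n - n = n := by omega
    have e2 : n + k - n = k := by omega
    rw [e1, e2] at this
    rw [← this]
    congr 1
    rw [← Nat.choose_symm h3]
    congr 1
    omega
  calc (2 * n).choose n ^ 2 * n.choose k ^ 3
      = n.choose k * ((2 * n).choose n * n.choose k) * ((2 * n).choose n * n.choose k) := by ring
    _ = n.choose k * ((2 * n).choose (n - k) * (n + k).choose n) *
        ((2 * n).choose k * (2 * n - k).choose n) := by nth_rewrite 1 [h2]; rw [h1]
    _ = n.choose k * (n + k).choose n * (2 * n - k).choose n * (2 * n).choose k *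
        (2 * n).choose (n - k) := by ring
end

section
/- For every natural number n, C(2n,n) * ∑_{k=0}^{n} C(n,k)^2 C(2n,2k) = ∑_{k=0}^{n} C(2k,k) C(2n-2k,n-k) C(2n,2k)^2. -/
lemma key_17 (n k : ℕ) (hk : k ≤ n) :
    ((2 * n).choose n) * (n.choose k) ^ 2 =
      ((2 * k).choose k) * ((2 * n - 2 * k).choose (n - k)) * ((2 * n).choose (2 * k)) := by
  have h1 : n ≤ 2 * n := by omega
  have h2 : k ≤ 2 * k := by omega
  have h3 : 2 * k ≤ 2 * n := by omega
  have h4 : n - k ≤ 2 * n - 2 * k := by omega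
  have e1 : 2 * n - n = n := by omega
  have e2 : 2 * k - k = k := by omega
  have e3 : 2 * n - 2 * k - (n - k) = n - k := by omega
  have : ((((2 * n).choose n) * (n.choose k) ^ 2 : ℕ) : ℚ) =
      ((((2 * k).choose k) * ((2 * n - 2 * k).choose (n - k)) * ((2 * n).choose (2 * k)) : ℕ) : ℚ) → _ :=
    fun h => Nat.cast_injective h
  apply this
  push_cast
  rw [Nat.cast_choose ℚ h1, Nat.cast_choose ℚ hk, Nat.cast_choose ℚ h2,
    Nat.cast_choose ℚ h4, Nat.cast_choose ℚ h3, e1, e2, e3]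
  have f : ∀ m : ℕ, (m.factorial : ℚ) ≠ 0 := fun m => by positivity
  field_simp

theorem stmt_17 (n : ℕ) :
    ((2 * n).choose n) *
        ∑ k ∈ Finset.range (n + 1), (n.choose k) ^ 2 * ((2 * n).choose (2 * k)) =
      ∑ k ∈ Finset.range (n + 1),
        ((2 * k).choose k) * ((2 * n - 2 * k).choose (n - k)) * ((2 * n).choose (2 * k)) ^ 2 := by
  rw [Finset.mul_sum]
  refine Finset.sum_congr rfl fun k hk => ?_
  have hk' : k ≤ n := Nat.lt_succ_iff.mp (Finset.mem_range.mp hk)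
  have := key_17 n k hk'
  calc (2 * n).choose n * ((n.choose k) ^ 2 * (2 * n).choose (2 * k))
      = ((2 * n).choose n * (n.choose k) ^ 2) * (2 * n).choose (2 * k) := by ring
    _ = _ := by rw [this]; ring
end

section
/- For every natural number n, C(2n,n)^2 * ∑_{k=0}^{n} C(n,k)^2 C(3n,n+k) = ((3n)! / (n!)^3) * ∑_{k=0}^{n} C(n,k) C(2n,k) C(2k,n). -/
open Polynomial Finset Nat

private lemma coeff_lin_pow {R : Type*} [CommSemiring R] (a b : R) (m i : ℕ) :
    ((C a + C b * X) ^ m).coeff i = (m.choose i : R) * (a ^ (m - i) * b ^ i) := by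
  rw [add_pow, finset_sum_coeff]
  have h : ∀ k ∈ range (m + 1),
      ((C a) ^ k * (C b * X) ^ (m - k) * (m.choose k : R[X])).coeff i
        = if k = m - i ∧ i ≤ m then (m.choose i : R) * (a ^ (m - i) * b ^ i) else 0 := by
    intro k hk
    rw [mem_range, Nat.lt_succ_iff] at hk
    have e : (C a) ^ k * (C b * X) ^ (m - k) * ((m.choose k : ℕ) : R[X])
        = C (a ^ k * b ^ (m - k) * ((m.choose k : ℕ) : R)) * X ^ (m - k) := by
      rw [mul_pow, ← C_pow, ← C_pow, ← C_eq_natCast, ← mul_assoc, ← C_mul,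
        mul_right_comm, ← C_mul, mul_right_comm]
    rw [e, coeff_C_mul, coeff_X_pow]
    by_cases him : i ≤ m
    · by_cases hki : k = m - i
      · subst hki
        have h2 : m.choose (m - i) = m.choose i := Nat.choose_symm him
        have h3 : m - (m - i) = i := Nat.sub_sub_self him
        simp only [h3, h2, if_pos rfl, if_pos (And.intro rfl him), mul_one]
        ring_nf
        simp [him]
      · have : ¬ (i = m - k) := by omega
        simp [this, hki]
    · have : ¬ (i = m - k) := by omega
      simp [this, him]
  rw [Finset.sum_congr rfl h]
  by_cases him : i ≤ m
  · simp only [him, and_true]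
    rw [Finset.sum_ite_eq' (range (m+1)) (m - i)]
    simp [Nat.lt_succ_iff, Nat.sub_le]
  · simp only [him, and_false, if_false, Finset.sum_const_zero]
    rw [Nat.choose_eq_zero_of_lt (by omega), Nat.cast_zero, zero_mul]

private lemma natmul_coeff (c1 c2 c3 f i : ℕ) :
    (((c1 : Polynomial ℕ) * (c2 : Polynomial ℕ) * X ^ f * (c3 : Polynomial ℕ)).coeff i)
      = if i = f then c1 * c2 * c3 else 0 := by
  have h : ((c1 : Polynomial ℕ) * (c2 : Polynomial ℕ) * X ^ f * (c3 : Polynomial ℕ))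
      = C (c1 * c2 * c3) * X ^ f := by
    rw [← C_eq_natCast c1, ← C_eq_natCast c2, ← C_eq_natCast c3, mul_right_comm _ (X ^ f) _,
      ← C_mul, ← C_mul]
    simp [Nat.cast_id]
  rw [h, coeff_C_mul, coeff_X_pow]
  split_ifs <;> simp

private lemma wayL (n : ℕ) :
    (((((C (1 + X) + X : (Polynomial ℕ)[X])) ^ n *
        (C (1 + X) + C X * X) ^ (2 * n)).coeff n).coeff n)
      = ∑ k ∈ range (n + 1), n.choose k * (2 * n).choose k * (2 * n).choose (n + k) := by
  rw [coeff_mul, Finset.Nat.sum_antidiagonal_eq_sum_range_succ_mk, finset_sum_coeff]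
  refine Finset.sum_congr rfl fun k hk => ?_
  rw [mem_range, Nat.lt_succ_iff] at hk
  have h1 : ((C (1 + X) + X : (Polynomial ℕ)[X]) ^ n).coeff k
      = (n.choose k : Polynomial ℕ) * (1 + X) ^ (n - k) := by
    have := coeff_lin_pow (1 + X : Polynomial ℕ) 1 n k
    simpa using this
  have h2 : ((C (1 + X) + C X * X : (Polynomial ℕ)[X]) ^ (2 * n)).coeff (n - k)
      = ((2 * n).choose (n - k) : Polynomial ℕ) * ((1 + X) ^ (2 * n - (n - k)) * X ^ (n - k)) := by
    exact coeff_lin_pow (1 + X : Polynomial ℕ) X (2 * n) (n - k)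
  rw [h1, h2]
  have h3 : (1 + X : Polynomial ℕ) ^ (n - k) * ((1 + X) ^ (2 * n - (n - k)) * X ^ (n - k))
      = (1 + X) ^ (2 * n) * X ^ (n - k) := by
    rw [← mul_assoc, ← pow_add]
    congr 2
    omega
  rw [mul_mul_mul_comm, h3, ← mul_assoc]
  rw [mul_assoc, mul_assoc]
  rw [← C_eq_natCast, ← C_eq_natCast, coeff_C_mul, coeff_C_mul, ← mul_assoc,
    coeff_mul_X_pow' _ (n - k) n]
  have h4 : n - k ≤ n := by omega
  have h5 : n - (n - k) = k := by omega
  rw [if_pos h4, h5, coeff_one_add_X_pow]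
  have h6 : (2 * n).choose (n - k) = (2 * n).choose (n + k) := by
    have := Nat.choose_symm (show n + k ≤ 2 * n by omega)
    rw [show 2 * n - (n + k) = n - k by omega] at this
    omega
  simp [h6, Nat.cast_id]
  ring

private lemma wayR (n : ℕ) :
    (((((C (1 + X) + X : (Polynomial ℕ)[X])) ^ n *
        (C (1 + X) + C X * X) ^ (2 * n)).coeff n).coeff n)
      = ∑ k ∈ range (n + 1), n.choose k * (2 * n).choose k * (2 * k).choose n := by
  have regroup : ((C (1 + X) + X : (Polynomial ℕ)[X])) ^ n * (C (1 + X) + C X * X) ^ (2 * n)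
      = ((1 + X) + C X) ^ n * (1 + C X * (1 + X)) ^ (2 * n) := by
    rw [map_add, map_one]; ring
  rw [regroup, add_pow (1 + X : (Polynomial ℕ)[X]) (C X) n,
    add_pow (1 : (Polynomial ℕ)[X]) (C X * (1 + X)) (2 * n),
    Finset.sum_mul_sum, finset_sum_coeff, finset_sum_coeff]
  refine Finset.sum_congr rfl fun b hb => ?_
  rw [mem_range, Nat.lt_succ_iff] at hb
  rw [finset_sum_coeff, finset_sum_coeff]
  have term : ∀ j ∈ range (2 * n + 1),
      (((1 + X : (Polynomial ℕ)[X]) ^ b * (C X) ^ (n - b) * (n.choose b : (Polynomial ℕ)[X]) *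
        (1 ^ j * (C X * (1 + X)) ^ (2 * n - j) * ((2 * n).choose j : (Polynomial ℕ)[X]))).coeff n).coeff n
      = if j = 2 * n - b then n.choose b * (2 * n).choose b * (2 * b).choose n else 0 := by
    intro j hj
    rw [mem_range, Nat.lt_succ_iff] at hj
    have e : (1 + X : (Polynomial ℕ)[X]) ^ b * (C X) ^ (n - b) * (n.choose b : (Polynomial ℕ)[X]) *
        (1 ^ j * (C X * (1 + X)) ^ (2 * n - j) * ((2 * n).choose j : (Polynomial ℕ)[X]))
        = C ((n.choose b : Polynomial ℕ) * ((2 * n).choose j : Polynomial ℕ) *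
            X ^ ((n - b) + (2 * n - j))) * (1 + X) ^ (b + (2 * n - j)) := by
      have hcast : ∀ c : ℕ, (c : (Polynomial ℕ)[X]) = C (c : Polynomial ℕ) :=
        fun c => (C_eq_natCast _).symm
      rw [one_pow, one_mul, hcast (n.choose b), hcast ((2 * n).choose j),
        mul_pow (C X : (Polynomial ℕ)[X]) (1 + X) (2 * n - j), map_mul, map_mul, map_pow,
        pow_add (1 + X : (Polynomial ℕ)[X]) b (2 * n - j),
        pow_add (C X : (Polynomial ℕ)[X]) (n - b) (2 * n - j)]
      ring
    rw [e, coeff_C_mul, coeff_one_add_X_pow, natmul_coeff]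
    by_cases hc : j = 2 * n - b
    · have h1 : n = n - b + (2 * n - j) := by omega
      have h2 : (2 * n).choose j = (2 * n).choose b := by
        rw [hc, ← Nat.choose_symm (show b ≤ 2 * n by omega)]
      have h3 : b + (2 * n - j) = 2 * b := by omega
      rw [if_pos h1, if_pos hc, h2, h3]
    · have h1 : ¬ (n = n - b + (2 * n - j)) := by omega
      rw [if_neg h1, if_neg hc]
  rw [Finset.sum_congr rfl term, Finset.sum_ite_eq' (range (2 * n + 1)) (2 * n - b)]
  simp [Nat.lt_succ_iff, Nat.sub_le]

private lemma core (n : ℕ) :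
    ∑ k ∈ range (n + 1), n.choose k * (2 * n).choose k * (2 * n).choose (n + k)
      = ∑ k ∈ range (n + 1), n.choose k * (2 * n).choose k * (2 * k).choose n :=
  (wayL n).symm.trans (wayR n)

private lemma termwise (n k : ℕ) (hk : k ≤ n) :
    (2 * n).choose n * n.choose k * (3 * n).choose (n + k)
      = (3 * n).choose n * (2 * n).choose k * (2 * n).choose (n + k) := by
  have hf : ∀ m : ℕ, (m ! : ℚ) ≠ 0 := fun m => Nat.cast_ne_zero.mpr (Nat.factorial_ne_zero m)
  have h1 : (((2 * n).choose n : ℚ)) = (2 * n)! / (n ! * n !) := by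
    rw [Nat.cast_choose ℚ (show n ≤ 2 * n by omega), show 2 * n - n = n by omega]
  have h2 : ((n.choose k : ℚ)) = n ! / (k ! * (n - k)!) := Nat.cast_choose ℚ hk
  have h3 : (((3 * n).choose (n + k) : ℚ)) = (3 * n)! / ((n + k)! * (2 * n - k)!) := by
    rw [Nat.cast_choose ℚ (show n + k ≤ 3 * n by omega), show 3 * n - (n + k) = 2 * n - k by omega]
  have h4 : (((3 * n).choose n : ℚ)) = (3 * n)! / (n ! * (2 * n)!) := by
    rw [Nat.cast_choose ℚ (show n ≤ 3 * n by omega), show 3 * n - n = 2 * n by omega]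
  have h5 : (((2 * n).choose k : ℚ)) = (2 * n)! / (k ! * (2 * n - k)!) := by
    rw [Nat.cast_choose ℚ (show k ≤ 2 * n by omega)]
  have h6 : (((2 * n).choose (n + k) : ℚ)) = (2 * n)! / ((n + k)! * (n - k)!) := by
    rw [Nat.cast_choose ℚ (show n + k ≤ 2 * n by omega), show 2 * n - (n + k) = n - k by omega]
  have key : ((2 * n).choose n * n.choose k * (3 * n).choose (n + k) : ℚ)
      = ((3 * n).choose n * (2 * n).choose k * (2 * n).choose (n + k) : ℚ) := by
    rw [h1, h2, h3, h4, h5, h6]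
    field_simp
  exact_mod_cast key

private lemma fact_div (n : ℕ) :
    (3 * n)! / (n !) ^ 3 = (3 * n).choose n * (2 * n).choose n := by
  have e1 : (3 * n).choose n * n ! * (2 * n)! = (3 * n)! := by
    have := Nat.choose_mul_factorial_mul_factorial (show n ≤ 3 * n by omega)
    rwa [show 3 * n - n = 2 * n by omega] at this
  have e2 : (2 * n).choose n * n ! * n ! = (2 * n)! := by
    have := Nat.choose_mul_factorial_mul_factorial (show n ≤ 2 * n by omega)
    rwa [show 2 * n - n = n by omega] at this
  refine Nat.div_eq_of_eq_mul_left (pow_pos (Nat.factorial_pos n) 3) ?_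
  rw [← e1, ← e2]
  ring

theorem stmt_18 (n : ℕ) :
    ((2 * n).choose n) ^ 2 *
        ∑ k ∈ Finset.range (n + 1), (n.choose k) ^ 2 * ((3 * n).choose (n + k)) =
      ((3 * n).factorial / (n.factorial) ^ 3) *
        ∑ k ∈ Finset.range (n + 1),
          (n.choose k) * ((2 * n).choose k) * ((2 * k).choose n) := by
  rw [fact_div, ← core, Finset.mul_sum, Finset.mul_sum]
  refine Finset.sum_congr rfl fun k hk => ?_
  rw [mem_range, Nat.lt_succ_iff] at hk
  have h := termwise n k hk
  calc ((2 * n).choose n) ^ 2 * ((n.choose k) ^ 2 * ((3 * n).choose (n + k)))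
      = ((2 * n).choose n * n.choose k) *
          ((2 * n).choose n * n.choose k * (3 * n).choose (n + k)) := by ring
    _ = ((2 * n).choose n * n.choose k) *
          ((3 * n).choose n * (2 * n).choose k * (2 * n).choose (n + k)) := by rw [h]
    _ = (3 * n).choose n * (2 * n).choose n *
          (n.choose k * (2 * n).choose k * (2 * n).choose (n + k)) := by ring
end

section
/- For every natural number n, the double sum ∑_{i=0}^{n} ∑_{j=0}^{n} (-1)^{i+j} C(n,i) C(n,j) C(i+j,n)^2 equals C(2n,n), as integers. -/
open Polynomial Finset

lemma keyA (n s : ℕ) :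
    (((((1 + X) * (1 + C X) : Polynomial (Polynomial ℤ)) ^ s).coeff n).coeff n) =
      (s.choose n : ℤ) ^ 2 := by
  have h1 : ((1 + X) * (1 + C X) : Polynomial (Polynomial ℤ)) ^ s
      = (1 + X) ^ s * C ((1 + X) ^ s) := by
    rw [mul_pow, map_pow, map_add, map_one]
  rw [h1, coeff_mul_C, coeff_one_add_X_pow]
  rw [show ((s.choose n : Polynomial ℤ)) = C ((s.choose n : ℤ)) from (map_natCast C _).symm]
  rw [coeff_C_mul, coeff_one_add_X_pow]
  ring



lemma keyB (n : ℕ) :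
    ((((X * (1 + C X) + C X : Polynomial (Polynomial ℤ)) ^ (2 * n)).coeff n).coeff n) =
      ((2 * n).choose n : ℤ) := by
  rw [add_pow, finset_sum_coeff, finset_sum_coeff]
  have hterm : ∀ k, ((((X * (1 + C X) : Polynomial (Polynomial ℤ))) ^ k *
      (C X) ^ (2 * n - k) * ((2 * n).choose k : Polynomial (Polynomial ℤ))).coeff n).coeff n
      = if n = k then (((1 + X) ^ k * X ^ (2 * n - k) * ((2*n).choose k : Polynomial ℤ)).coeff n) else 0 := by
    intro k
    have : ((X * (1 + C X) : Polynomial (Polynomial ℤ))) ^ k *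
        (C X) ^ (2 * n - k) * ((2 * n).choose k : Polynomial (Polynomial ℤ))
        = X ^ k * C ((1 + X) ^ k * X ^ (2 * n - k) * ((2*n).choose k : Polynomial ℤ)) := by
      rw [map_mul, map_mul, map_pow, map_pow, map_add, map_one, map_natCast C, mul_pow]
      ring
    rw [this, coeff_mul_C, coeff_X_pow]
    split <;> simp
  rw [Finset.sum_congr rfl (fun k _ => hterm k), Finset.sum_ite_eq (range (2*n+1)) n]
  rw [if_pos (by simp [Nat.lt_succ_iff]; omega)]
  rw [show ((2*n).choose n : Polynomial ℤ) = C (((2*n).choose n : ℤ)) from (map_natCast C _).symm]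
  rw [coeff_mul_C, coeff_mul_X_pow']
  simp [Nat.two_mul, coeff_one_add_X_pow]

theorem stmt_19 (n : ℕ) :
    ∑ i ∈ Finset.range (n + 1), ∑ j ∈ Finset.range (n + 1),
        (-1 : ℤ) ^ (i + j) * (n.choose i) * (n.choose j) * ((i + j).choose n) ^ 2 =
      ((2 * n).choose n) := by
  set P : Polynomial (Polynomial ℤ) := (1 + X) * (1 + C X) with hP
  have hbin : (1 - P) ^ n
      = ∑ i ∈ range (n + 1), (((-1 : ℤ) ^ i * (n.choose i : ℤ)) • P ^ i) := by
    rw [sub_eq_add_neg, add_comm, add_pow]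
    refine Finset.sum_congr rfl fun i _ => ?_
    rw [one_pow, mul_one, mul_comm ((-1:ℤ)^i) ((n.choose i : ℤ)), mul_smul,
      ← _root_.smul_pow, neg_one_smul, zsmul_eq_mul, Int.cast_natCast]
    exact mul_comm _ _
  have hsq : (1 - P) ^ n * (1 - P) ^ n
      = ∑ i ∈ range (n + 1), ∑ j ∈ range (n + 1),
          (((-1 : ℤ) ^ (i + j) * (n.choose i : ℤ) * (n.choose j : ℤ)) • P ^ (i + j)) := by
    rw [hbin, Finset.sum_mul_sum]
    refine Finset.sum_congr rfl fun i _ => Finset.sum_congr rfl fun j _ => ?_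
    rw [smul_mul_smul_comm, ← pow_add]
    congr 1
    ring
  have hQ : (1 - P) ^ n * (1 - P) ^ n = (X * (1 + C X) + C X) ^ (2 * n) := by
    rw [← pow_add, show n + n = 2 * n by ring]
    rw [show (1 - P : Polynomial (Polynomial ℤ)) = -(X * (1 + C X) + C X) by rw [hP]; ring]
    exact Even.neg_pow (even_two_mul n) (X * (1 + C X) + C X : Polynomial (Polynomial ℤ))
  calc ∑ i ∈ Finset.range (n + 1), ∑ j ∈ Finset.range (n + 1),
        (-1 : ℤ) ^ (i + j) * (n.choose i) * (n.choose j) * ((i + j).choose n) ^ 2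
      = ((((X * (1 + C X) + C X : Polynomial (Polynomial ℤ)) ^ (2 * n)).coeff n).coeff n) := by
        rw [← hQ, hsq, finset_sum_coeff, finset_sum_coeff]
        refine Finset.sum_congr rfl fun i _ => ?_
        rw [finset_sum_coeff, finset_sum_coeff]
        refine Finset.sum_congr rfl fun j _ => ?_
        rw [coeff_smul, coeff_smul, smul_eq_mul, keyA]
    _ = ((2 * n).choose n : ℤ) := keyB n
end
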